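/- arXiv:2110.09555 — 2 statements merged into one kernel-verified Lean document; each statement's English description precedes it below -/
import Mathlib

section
/- Let d ≥ 1, α ∈ (0, β), β ∈ (0, d+2]. There exists a constant N = N(d, α, β) such that for every measurable f ≥ 0 on ℝ^{d+1} and every ρ ∈ (0, ∞) one has P_α(1_{C_ρ} f)(0) ≤ N ρ^α M f(0) and P_α(1_{C_ρ^c} f)(0) ≤ N ρ^{α-β} M_β f(0). -/
open MeasureTheory Set ENNReal Filter

noncomputable section

/-- Euclidean space `ℝ^d`. -/
abbrev Ed (d : ℕ) := EuclideanSpace ℝ (Fin d)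

/-- Points of `ℝ^{d+1}`: `z = (t, x)`. -/
abbrev Pt (d : ℕ) := ℝ × Ed d

/-- The parabolic cylinder `C_ρ(t,x)`. -/
def pCyl (d : ℕ) (ρ : ℝ) (z : Pt d) : Set (Pt d) :=
  {w | dist z.2 w.2 < ρ ∧ z.1 ≤ w.1 ∧ w.1 < z.1 + ρ ^ 2}

/-- The average `⨍_{C_ρ(z)} f`. -/
def pAvg (d : ℕ) (ρ : ℝ) (z : Pt d) (f : Pt d → ℝ≥0∞) : ℝ≥0∞ :=
  (volume (pCyl d ρ z))⁻¹ * ∫⁻ w in pCyl d ρ z, f w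

/-- The fractional maximal function `M_β f`. -/
def Mbeta (d : ℕ) (β : ℝ) (f : Pt d → ℝ≥0∞) (z : Pt d) : ℝ≥0∞ :=
  ⨆ (ρ : ℝ) (_ : 0 < ρ), ENNReal.ofReal (ρ ^ β) * pAvg d ρ z f

/-- The kernel `p_α(s, r)`. -/
def pKer (d : ℕ) (α : ℝ) (s r : ℝ) : ℝ≥0∞ :=
  if 0 < s then ENNReal.ofReal (s ^ (-(((d : ℝ) + 2 - α) / 2)) * Real.exp (-(r ^ 2) / s)) else 0

/-- The parabolic potential `P_α f`. -/
def Palpha (d : ℕ) (α : ℝ) (f : Pt d → ℝ≥0∞) (z : Pt d) : ℝ≥0∞ :=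
  ∫⁻ w : Pt d, pKer d α w.1 ‖w.2‖ * f (z.1 + w.1, z.2 + w.2)

/-- The parabolic Morrey norm `‖f‖_{E_{p,β}(Q)}`. -/
def MorreyNorm (d : ℕ) (p β : ℝ) (Q : Set (Pt d)) (f : Pt d → ℝ≥0∞) : ℝ≥0∞ :=
  ⨆ (ρ : ℝ) (_ : 0 < ρ) (z : Pt d) (_ : z ∈ Q),
    ENNReal.ofReal (ρ ^ β) * (pAvg d ρ z fun w => Q.indicator f w ^ p) ^ (1 / p)

/-- The `L_p`-norm on `ℝ^{d+1}`. -/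
def LpNormE (d : ℕ) (p : ℝ) (f : Pt d → ℝ≥0∞) : ℝ≥0∞ :=
  (∫⁻ z : Pt d, f z ^ p) ^ (1 / p)

/-- The mixed norm `‖f‖_{L_{q₁,q₂}}`. -/
def MixedNorm (d : ℕ) (q₁ q₂ : ℝ) (f : Pt d → ℝ≥0∞) : ℝ≥0∞ :=
  (∫⁻ t : ℝ, (∫⁻ x : Ed d, f (t, x) ^ q₁) ^ (q₂ / q₁)) ^ (1 / q₂)

/-- The normalized mixed norm `‖f‖_{L_{q₁,q₂}(Γ)}`. -/
def MixedNormOn (d : ℕ) (q₁ q₂ : ℝ) (Γ : Set (Pt d)) (f : Pt d → ℝ≥0∞) : ℝ≥0∞ :=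
  (MixedNorm d q₁ q₂ (Γ.indicator 1))⁻¹ * MixedNorm d q₁ q₂ (Γ.indicator f)

/-- The mixed-norm parabolic Morrey norm `‖f‖_{E_{q₁,q₂,β}(Q)}`. -/
def MixedMorrey (d : ℕ) (q₁ q₂ β : ℝ) (Q : Set (Pt d)) (f : Pt d → ℝ≥0∞) : ℝ≥0∞ :=
  ⨆ (ρ : ℝ) (_ : 0 < ρ) (z : Pt d) (_ : z ∈ Q),
    ENNReal.ofReal (ρ ^ β) * MixedNormOn d q₁ q₂ (pCyl d ρ z) (Q.indicator f)

/-- The symmetric parabolic maximal function `M̂ f`. -/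
def pMax (d : ℕ) (f : Pt d → ℝ≥0∞) (z : Pt d) : ℝ≥0∞ :=
  ⨆ (r : ℝ) (_ : 0 < r) (w : Pt d) (_ : z ∈ pCyl d r w), pAvg d r w f

/-- The time derivative `∂_t u`. -/
def timeDeriv (d : ℕ) (u : Pt d → ℝ) (z : Pt d) : ℝ :=
  fderiv ℝ u z ((1 : ℝ), (0 : Ed d))

/-- The spatial partial derivative `D_i u`. -/
def spDeriv (d : ℕ) (i : Fin d) (u : Pt d → ℝ) (z : Pt d) : ℝ :=
  fderiv ℝ u z ((0 : ℝ), EuclideanSpace.single i (1 : ℝ))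

/-- The Euclidean norm of the spatial gradient `|Du|`. -/
def gradNorm (d : ℕ) (u : Pt d → ℝ) (z : Pt d) : ℝ :=
  Real.sqrt (∑ i : Fin d, spDeriv d i u z ^ 2)

/-- The spatial Laplacian `Δu`. -/
def lap (d : ℕ) (u : Pt d → ℝ) (z : Pt d) : ℝ :=
  ∑ i : Fin d, spDeriv d i (spDeriv d i u) z

/-- The (Frobenius) norm of the spatial Hessian `|D²u|`. -/
def hessNorm (d : ℕ) (u : Pt d → ℝ) (z : Pt d) : ℝ :=
  Real.sqrt (∑ i : Fin d, ∑ j : Fin d, spDeriv d i (spDeriv d j u) z ^ 2)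


-- ### auxiliary

def Evb (d : ℕ) : ℝ≥0∞ := volume (Metric.ball (0 : Ed d) 1)

lemma aux_pCyl_eq (d : ℕ) (r : ℝ) (z : Pt d) :
    pCyl d r z = Ico z.1 (z.1 + r ^ 2) ×ˢ Metric.ball z.2 r := by
  ext w
  simp only [pCyl, mem_setOf_eq, mem_prod, mem_Ico, Metric.mem_ball, dist_comm]
  tauto

lemma aux_measurableSet_pCyl (d : ℕ) (r : ℝ) (z : Pt d) : MeasurableSet (pCyl d r z) := by
  rw [aux_pCyl_eq]; exact measurableSet_Ico.prod measurableSet_ball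

lemma aux_nontrivial (d : ℕ) (hd : 1 ≤ d) : Nontrivial (Ed d) := by
  refine ⟨⟨0, EuclideanSpace.single ⟨0, hd⟩ 1, fun h => ?_⟩⟩
  have := congrArg (fun v : Ed d => v (⟨0, hd⟩ : Fin d)) h
  simp [EuclideanSpace.single_apply] at this

lemma aux_volume_pCyl (d : ℕ) (hd : 1 ≤ d) {r : ℝ} (hr : 0 < r) :
    volume (pCyl d r (0 : Pt d)) = ENNReal.ofReal (r ^ ((d : ℝ) + 2)) * Evb d := by
  haveI := aux_nontrivial d hd
  rw [aux_pCyl_eq, Measure.volume_eq_prod, Measure.prod_prod, Prod.fst_zero, Prod.snd_zero,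
    Measure.addHaar_ball _ _ hr.le, Real.volume_Ico, finrank_euclideanSpace_fin]
  rw [zero_add, sub_zero, ← mul_assoc, ← ENNReal.ofReal_mul (by positivity), ← pow_add]
  congr 2
  rw [show ((d : ℝ) + 2) = ((2 + d : ℕ) : ℝ) by push_cast; ring, Real.rpow_natCast]

lemma aux_Evb_pos (d : ℕ) : 0 < Evb d := Metric.measure_ball_pos _ _ one_pos

lemma aux_Evb_ne_top (d : ℕ) : Evb d ≠ ⊤ := measure_ball_lt_top.ne

/-- integral over a cylinder is controlled by the maximal function -/
lemma aux_cyl_integral_le (d : ℕ) (hd : 1 ≤ d) (β' : ℝ) (f : Pt d → ℝ≥0∞) {r : ℝ} (hr : 0 < r) :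
    ∫⁻ w in pCyl d r (0 : Pt d), f w ≤
      ENNReal.ofReal (r ^ ((d : ℝ) + 2 - β')) * (Evb d * Mbeta d β' f 0) := by
  have hvol := aux_volume_pCyl d hd hr
  have hv0 : volume (pCyl d r (0 : Pt d)) ≠ 0 := by
    rw [hvol]
    exact (ENNReal.mul_pos (by simp [Real.rpow_pos_of_pos hr]) (aux_Evb_pos d).ne').ne'
  have hvt : volume (pCyl d r (0 : Pt d)) ≠ ⊤ :=
    hvol ▸ ENNReal.mul_ne_top ENNReal.ofReal_ne_top (aux_Evb_ne_top d)
  have hM : ENNReal.ofReal (r ^ β') * pAvg d r 0 f ≤ Mbeta d β' f 0 :=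
    le_iSup₂ (f := fun ρ (_ : 0 < ρ) => ENNReal.ofReal (ρ ^ β') * pAvg d ρ 0 f) r hr
  have key : ∫⁻ w in pCyl d r (0 : Pt d), f w
      = volume (pCyl d r (0 : Pt d)) * pAvg d r 0 f := by
    rw [pAvg, ← mul_assoc, ENNReal.mul_inv_cancel hv0 hvt, one_mul]
  rw [key, hvol]
  have hsplit : ENNReal.ofReal (r ^ ((d : ℝ) + 2))
      = ENNReal.ofReal (r ^ ((d : ℝ) + 2 - β')) * ENNReal.ofReal (r ^ β') := by
    rw [← ENNReal.ofReal_mul (by positivity), ← Real.rpow_add hr]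
    ring_nf
  rw [hsplit]
  calc ENNReal.ofReal (r ^ ((d : ℝ) + 2 - β')) * ENNReal.ofReal (r ^ β') * Evb d * pAvg d r 0 f
      = ENNReal.ofReal (r ^ ((d : ℝ) + 2 - β')) * (Evb d * (ENNReal.ofReal (r ^ β') * pAvg d r 0 f)) := by
        ring
    _ ≤ _ := by gcongr


lemma aux_measurable_pKer (d : ℕ) (α : ℝ) :
    Measurable (fun w : Pt d => pKer d α w.1 ‖w.2‖) := by
  unfold pKer
  refine Measurable.ite (measurableSet_lt measurable_const measurable_fst) ?_ measurable_const
  apply Measurable.ennreal_ofReal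
  exact ((measurable_fst.pow measurable_const).mul
    (((measurable_snd.norm.pow_const 2).neg.div measurable_fst).exp))

/-- the fundamental pointwise kernel bound -/
lemma aux_pKer_le (d : ℕ) {α : ℝ} (hαd : α ≤ (d : ℝ) + 2) {s r σ x : ℝ}
    (hσ : 0 < σ) (hs : σ ^ 2 ≤ s) (hx : 0 ≤ x) (hxs : x * s ≤ r ^ 2) :
    pKer d α s r ≤ ENNReal.ofReal (σ ^ (α - ((d : ℝ) + 2)) *
      (Real.exp 1 * (Nat.factorial (d + 2)) / (1 + x) ^ (d + 2))) := by
  have hs0 : 0 < s := lt_of_lt_of_le (by positivity) hs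
  rw [pKer, if_pos hs0]
  apply ENNReal.ofReal_le_ofReal
  have h1 : s ^ (-(((d : ℝ) + 2 - α) / 2)) ≤ σ ^ (α - ((d : ℝ) + 2)) := by
    have hle : (σ ^ 2 : ℝ) ^ (-(((d : ℝ) + 2 - α) / 2)) ≤ σ ^ (α - ((d : ℝ) + 2)) := by
      rw [← Real.rpow_natCast σ 2, ← Real.rpow_mul hσ.le]
      apply le_of_eq
      congr 1
      push_cast
      ring
    refine le_trans ?_ hle
    exact Real.rpow_le_rpow_of_nonpos (by positivity) hs (by linarith)
  have h2 : Real.exp (-(r ^ 2) / s) ≤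
      Real.exp 1 * (Nat.factorial (d + 2)) / (1 + x) ^ (d + 2) := by
    have hxr : Real.exp (-(r ^ 2) / s) ≤ Real.exp (-x) := by
      apply Real.exp_le_exp.2
      rw [neg_div, neg_le_neg_iff]
      rw [le_div_iff₀ hs0]
      linarith
    refine hxr.trans ?_
    have key : (1 + x) ^ (d + 2) ≤ (Real.exp 1 * (Nat.factorial (d + 2))) * Real.exp x := by
      have h := Real.pow_div_factorial_le_exp (1 + x) (by linarith : (0:ℝ) ≤ 1 + x) (d + 2)
      rw [div_le_iff₀ (by positivity), Real.exp_add] at h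
      calc (1 + x) ^ (d + 2) ≤ Real.exp 1 * Real.exp x * (Nat.factorial (d + 2)) := h
        _ = Real.exp 1 * (Nat.factorial (d + 2)) * Real.exp x := by ring
    rw [Real.exp_neg, le_div_iff₀ (by positivity), inv_mul_le_iff₀ (Real.exp_pos x)]
    linarith [key]
  have h10 : (0:ℝ) ≤ s ^ (-(((d : ℝ) + 2 - α) / 2)) := Real.rpow_nonneg hs0.le _
  exact mul_le_mul h1 h2 (Real.exp_nonneg _) (Real.rpow_nonneg hσ.le _)

lemma aux_dy_up {c u : ℝ} (hc : 1 < c) (hu : 1 ≤ u) :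
    ∃ k : ℕ, c ^ k ≤ u ∧ u < c ^ (k + 1) := exists_nat_pow_near hu hc

lemma aux_dy_down {c t : ℝ} (hc : 1 < c) (ht : 0 < t) (ht1 : t < 1) :
    ∃ k : ℕ, t * c ^ k ≤ 1 ∧ 1 < t * c ^ (k + 1) := by
  obtain ⟨k, h1, h2⟩ := exists_nat_pow_near (x := 1 / t)
    (one_le_one_div ht ht1.le) hc
  refine ⟨k, ?_, ?_⟩
  · have := (le_div_iff₀ ht).1 h1
    linarith [this]
  · have := (div_lt_iff₀ ht).1 h2
    linarith [this]

/-- master lemma: decompose the kernel over a countable family of cylinders -/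
lemma aux_master (d : ℕ) (hd : 1 ≤ d) (α β' : ℝ) (f : Pt d → ℝ≥0∞) (hf : Measurable f)
    (S : Set (Pt d)) {ι : Type} [Countable ι] (c : ι → ℝ≥0∞) (R : ι → ℝ) (hR : ∀ i, 0 < R i)
    (hdom : ∀ w : Pt d, w ∈ S → 0 < w.1 →
      ∃ i, w ∈ pCyl d (R i) 0 ∧ pKer d α w.1 ‖w.2‖ ≤ c i) :
    Palpha d α (S.indicator f) 0 ≤
      (∑' i, c i * ENNReal.ofReal (R i ^ ((d : ℝ) + 2 - β'))) * (Evb d * Mbeta d β' f 0) := by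
  have step1 : Palpha d α (S.indicator f) 0
      = ∫⁻ w : Pt d, pKer d α w.1 ‖w.2‖ * (S.indicator f) w := by
    simp only [Palpha, Prod.fst_zero, Prod.snd_zero, zero_add]
  rw [step1]
  have step2 : ∀ w : Pt d, pKer d α w.1 ‖w.2‖ * (S.indicator f) w ≤
      ∑' i, c i * (pCyl d (R i) 0).indicator f w := by
    intro w
    by_cases hw : w ∈ S
    · rw [indicator_of_mem hw]
      by_cases hw1 : 0 < w.1
      · obtain ⟨i, hmem, hker⟩ := hdom w hw hw1
        calc pKer d α w.1 ‖w.2‖ * f w ≤ c i * (pCyl d (R i) 0).indicator f w := by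
              rw [indicator_of_mem hmem]; exact mul_le_mul_left hker _
          _ ≤ _ := ENNReal.le_tsum i
      · have h0 : pKer d α w.1 ‖w.2‖ = 0 := by rw [pKer, if_neg hw1]
        simp [h0]
    · simp [indicator_of_notMem hw]
  refine (lintegral_mono step2).trans ?_
  rw [lintegral_tsum (fun i =>
    ((hf.indicator (aux_measurableSet_pCyl d (R i) 0)).const_mul _).aemeasurable)]
  have hterm : ∀ i, (∫⁻ w, c i * (pCyl d (R i) 0).indicator f w) ≤
      (c i * ENNReal.ofReal (R i ^ ((d : ℝ) + 2 - β'))) * (Evb d * Mbeta d β' f 0) := by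
    intro i
    rw [lintegral_const_mul _ (hf.indicator (aux_measurableSet_pCyl d (R i) 0)),
      lintegral_indicator (aux_measurableSet_pCyl d (R i) 0)]
    calc c i * ∫⁻ w in pCyl d (R i) 0, f w
        ≤ c i * (ENNReal.ofReal (R i ^ ((d : ℝ) + 2 - β')) * (Evb d * Mbeta d β' f 0)) :=
          mul_le_mul_right (aux_cyl_integral_le d hd β' f (hR i)) _
      _ = _ := by ring
  exact (ENNReal.tsum_le_tsum hterm).trans (le_of_eq ENNReal.tsum_mul_right)


lemma aux_half_rpow (m : ℕ) (c : ℝ) : ((1/2 : ℝ) ^ m) ^ c = (2 : ℝ) ^ (-((m : ℝ) * c)) := by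
  rw [← Real.rpow_natCast (1/2 : ℝ) m, ← Real.rpow_mul (by norm_num : (0:ℝ) ≤ 1/2),
    show (1/2 : ℝ) = (2 : ℝ) ^ (-1 : ℝ) by rw [Real.rpow_neg_one]; norm_num,
    ← Real.rpow_mul (by norm_num : (0:ℝ) ≤ 2)]
  ring_nf

lemma aux_two_pow_rpow (m : ℕ) (c : ℝ) : (((2 : ℝ) ^ m)) ^ c = (2 : ℝ) ^ ((m : ℝ) * c) := by
  rw [← Real.rpow_natCast 2 m, ← Real.rpow_mul (by norm_num : (0:ℝ) ≤ 2)]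

lemma aux_two_rpow_nat (a : ℝ) (k : ℕ) : ((2 : ℝ) ^ a) ^ (k : ℕ) = (2 : ℝ) ^ (a * k) := by
  rw [← Real.rpow_natCast ((2:ℝ) ^ a) k, ← Real.rpow_mul (by norm_num : (0:ℝ) ≤ 2)]

lemma aux_J (n : ℕ) (j : ℕ) :
    ((j:ℝ)+1) ^ (n+2) / (1+(j:ℝ)^2) ^ (n+2) ≤ 2 ^ (n+2) / ((j:ℝ)+1) ^ 2 := by
  have hj1 : (1:ℝ) ≤ (j:ℝ)+1 := by
    have := Nat.cast_nonneg (α := ℝ) j; linarith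
  have h1 : ((j:ℝ)+1) ^ 2 ≤ 2 * (1+(j:ℝ)^2) := by nlinarith [sq_nonneg ((j:ℝ)-1)]
  have key : ((j:ℝ)+1) ^ (n+2) * ((j:ℝ)+1) ^ 2 ≤ 2 ^ (n+2) * (1+(j:ℝ)^2) ^ (n+2) := by
    calc ((j:ℝ)+1) ^ (n+2) * ((j:ℝ)+1) ^ 2 = ((j:ℝ)+1) ^ (n+2+2) := by rw [pow_add]; ring
      _ ≤ ((j:ℝ)+1) ^ (2*(n+2)) := pow_le_pow_right₀ hj1 (by omega)
      _ = (((j:ℝ)+1) ^ 2) ^ (n+2) := by rw [← pow_mul]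
      _ ≤ (2 * (1+(j:ℝ)^2)) ^ (n+2) := pow_le_pow_left₀ (by positivity) h1 _
      _ = 2 ^ (n+2) * (1+(j:ℝ)^2) ^ (n+2) := mul_pow _ _ _
  rw [div_le_div_iff₀ (by positivity) (by positivity)]
  linarith [key]

lemma aux_term1 (d : ℕ) {α ρ : ℝ} (hα : 0 < α) (hρ : 0 < ρ) (k j : ℕ) :
    (ρ * (1/2) ^ (k+1)) ^ (α - ((d:ℝ)+2)) *
      (Real.exp 1 * (Nat.factorial (d+2)) / (1+((j:ℝ))^2) ^ (d+2)) *
      (ρ * ((1/2) ^ k * (2 * ((j:ℝ)+1)))) ^ ((d:ℝ)+2) ≤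
    ρ ^ α * ((Real.exp 1 * (Nat.factorial (d+2)) * (2:ℝ) ^ ((4:ℝ) * ((d:ℝ)+2))) *
      (((2:ℝ) ^ (-α)) ^ k * (1/((j:ℝ)+1)) ^ 2)) := by
  set E : ℝ := Real.exp 1 * (Nat.factorial (d+2)) with hEdef
  have hE : 0 < E := by positivity
  have hD0 : (0:ℝ) ≤ (d:ℝ)+2 := by positivity
  have hj1 : (0:ℝ) < (j:ℝ)+1 := by positivity
  have hk0 : (0:ℝ) ≤ (k:ℝ) := Nat.cast_nonneg k
  have e1 : (ρ * (1/2:ℝ) ^ (k+1)) ^ (α - ((d:ℝ)+2))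
      = ρ ^ (α-((d:ℝ)+2)) * (2:ℝ) ^ (-(((k:ℝ)+1) * (α-((d:ℝ)+2)))) := by
    rw [Real.mul_rpow hρ.le (by positivity), aux_half_rpow]
    congr 2
    push_cast
    ring
  have e3 : (ρ * ((1/2:ℝ) ^ k * (2*((j:ℝ)+1)))) ^ ((d:ℝ)+2)
      = ρ ^ ((d:ℝ)+2) * ((2:ℝ) ^ (-((k:ℝ) * ((d:ℝ)+2))) *
        ((2:ℝ) ^ ((d:ℝ)+2) * ((j:ℝ)+1) ^ ((d:ℝ)+2))) := by
    rw [Real.mul_rpow hρ.le (by positivity), Real.mul_rpow (by positivity) (by positivity),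
      Real.mul_rpow (by norm_num) hj1.le, aux_half_rpow]
  have eρ : ρ ^ (α-((d:ℝ)+2)) * ρ ^ ((d:ℝ)+2) = ρ ^ α := by
    rw [← Real.rpow_add hρ]; ring_nf
  have e2 : (2:ℝ) ^ (-(((k:ℝ)+1) * (α-((d:ℝ)+2)))) * ((2:ℝ) ^ (-((k:ℝ)*((d:ℝ)+2))) * (2:ℝ) ^ ((d:ℝ)+2))
      = (2:ℝ) ^ (2*((d:ℝ)+2) - α - (k:ℝ)*α) := by
    rw [← Real.rpow_add two_pos, ← Real.rpow_add two_pos]; ring_nf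
  have e5 : (2:ℝ) ^ (2*((d:ℝ)+2)) * ((2:ℝ) ^ (-α)) ^ k = (2:ℝ) ^ (2*((d:ℝ)+2) - α*(k:ℝ)) := by
    rw [aux_two_rpow_nat, ← Real.rpow_add two_pos]; ring_nf
  have hb : (2:ℝ) ^ (2*((d:ℝ)+2) - α - (k:ℝ)*α) ≤ (2:ℝ) ^ (2*((d:ℝ)+2)) * ((2:ℝ) ^ (-α)) ^ k := by
    rw [e5]
    exact Real.rpow_le_rpow_of_exponent_le one_le_two (by nlinarith)
  have ecastD : ((j:ℝ)+1) ^ ((d:ℝ)+2) = ((j:ℝ)+1) ^ (d+2 : ℕ) := by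
    rw [← Real.rpow_natCast ((j:ℝ)+1) (d+2)]; norm_num
  have e6 : ((2:ℝ) ^ (d+2 : ℕ) : ℝ) = (2:ℝ) ^ ((d:ℝ)+2) := by
    rw [← Real.rpow_natCast 2 (d+2)]; norm_num
  have emain : (ρ * (1/2:ℝ) ^ (k+1)) ^ (α - ((d:ℝ)+2)) * (E / (1+((j:ℝ))^2) ^ (d+2)) *
      (ρ * ((1/2:ℝ) ^ k * (2*((j:ℝ)+1)))) ^ ((d:ℝ)+2)
      = ρ ^ α * ((2:ℝ) ^ (2*((d:ℝ)+2) - α - (k:ℝ)*α) *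
        (E * (((j:ℝ)+1) ^ (d+2 : ℕ) / (1+(j:ℝ)^2) ^ (d+2)))) := by
    calc (ρ * (1/2:ℝ) ^ (k+1)) ^ (α - ((d:ℝ)+2)) * (E / (1+((j:ℝ))^2) ^ (d+2)) *
        (ρ * ((1/2:ℝ) ^ k * (2*((j:ℝ)+1)))) ^ ((d:ℝ)+2)
        = (ρ ^ (α-((d:ℝ)+2)) * ρ ^ ((d:ℝ)+2)) *
          (((2:ℝ) ^ (-(((k:ℝ)+1) * (α-((d:ℝ)+2)))) * ((2:ℝ) ^ (-((k:ℝ)*((d:ℝ)+2))) * (2:ℝ) ^ ((d:ℝ)+2))) *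
          (E / (1+(j:ℝ)^2) ^ (d+2) * ((j:ℝ)+1) ^ ((d:ℝ)+2))) := by
          rw [e1, e3]; ring
      _ = ρ ^ α * ((2:ℝ) ^ (2*((d:ℝ)+2) - α - (k:ℝ)*α) *
          (E * (((j:ℝ)+1) ^ (d+2 : ℕ) / (1+(j:ℝ)^2) ^ (d+2)))) := by
          rw [eρ, e2, ecastD]; ring
  rw [emain]
  have hJ := aux_J d j
  calc ρ ^ α * ((2:ℝ) ^ (2*((d:ℝ)+2) - α - (k:ℝ)*α) *
        (E * (((j:ℝ)+1) ^ (d+2 : ℕ) / (1+(j:ℝ)^2) ^ (d+2))))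
      ≤ ρ ^ α * (((2:ℝ) ^ (2*((d:ℝ)+2)) * ((2:ℝ) ^ (-α)) ^ k) *
        (E * ((2:ℝ) ^ (d+2 : ℕ) / ((j:ℝ)+1) ^ 2))) := by
        apply mul_le_mul_of_nonneg_left _ (Real.rpow_nonneg hρ.le α)
        apply mul_le_mul hb (mul_le_mul_of_nonneg_left hJ hE.le) (by positivity)
          (by positivity)
    _ ≤ ρ ^ α * ((E * (2:ℝ) ^ ((4:ℝ) * ((d:ℝ)+2))) *
        (((2:ℝ) ^ (-α)) ^ k * (1/((j:ℝ)+1)) ^ 2)) := by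
        apply mul_le_mul_of_nonneg_left _ (Real.rpow_nonneg hρ.le α)
        rw [e6]
        have h8 : (2:ℝ) ^ (2*((d:ℝ)+2)) * (2:ℝ) ^ ((d:ℝ)+2) ≤ (2:ℝ) ^ ((4:ℝ)*((d:ℝ)+2)) := by
          rw [← Real.rpow_add two_pos]
          exact Real.rpow_le_rpow_of_exponent_le one_le_two (by linarith)
        calc ((2:ℝ) ^ (2*((d:ℝ)+2)) * ((2:ℝ) ^ (-α)) ^ k) * (E * ((2:ℝ) ^ ((d:ℝ)+2) / ((j:ℝ)+1) ^ 2))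
            = (((2:ℝ) ^ (-α)) ^ k * (1/((j:ℝ)+1)) ^ 2) * (E * ((2:ℝ) ^ (2*((d:ℝ)+2)) * (2:ℝ) ^ ((d:ℝ)+2))) := by
              rw [div_pow, one_pow]; ring
          _ ≤ (((2:ℝ) ^ (-α)) ^ k * (1/((j:ℝ)+1)) ^ 2) * (E * (2:ℝ) ^ ((4:ℝ)*((d:ℝ)+2))) := by
              apply mul_le_mul_of_nonneg_left _ (by positivity)
              exact mul_le_mul_of_nonneg_left h8 hE.le
          _ = (E * (2:ℝ) ^ ((4:ℝ)*((d:ℝ)+2))) * (((2:ℝ) ^ (-α)) ^ k * (1/((j:ℝ)+1)) ^ 2) := by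
              ring

lemma aux_termA (d : ℕ) {α β ρ : ℝ} (hα : 0 < α) (hαβ : α < β) (hβd : β ≤ (d:ℝ)+2)
    (hρ : 0 < ρ) (k j : ℕ) :
    (ρ * 2 ^ k) ^ (α - ((d:ℝ)+2)) *
      (Real.exp 1 * (Nat.factorial (d+2)) / (1+((j:ℝ))^2) ^ (d+2)) *
      (ρ * (2 ^ (k+1) * ((j:ℝ)+1))) ^ ((d:ℝ)+2-β) ≤
    ρ ^ (α-β) * ((Real.exp 1 * (Nat.factorial (d+2)) * (2:ℝ) ^ ((4:ℝ) * ((d:ℝ)+2))) *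
      (((2:ℝ) ^ (α-β)) ^ k * (1/((j:ℝ)+1)) ^ 2)) := by
  set E : ℝ := Real.exp 1 * (Nat.factorial (d+2)) with hEdef
  have hE : 0 < E := by positivity
  have hD0 : (0:ℝ) ≤ (d:ℝ)+2 := by positivity
  have hj1 : (1:ℝ) ≤ (j:ℝ)+1 := by
    have := Nat.cast_nonneg (α := ℝ) j; linarith
  have hk0 : (0:ℝ) ≤ (k:ℝ) := Nat.cast_nonneg k
  have e1 : (ρ * (2:ℝ) ^ k) ^ (α - ((d:ℝ)+2))
      = ρ ^ (α-((d:ℝ)+2)) * (2:ℝ) ^ ((k:ℝ) * (α-((d:ℝ)+2))) := by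
    rw [Real.mul_rpow hρ.le (by positivity), aux_two_pow_rpow]
  have e3 : (ρ * ((2:ℝ) ^ (k+1) * ((j:ℝ)+1))) ^ ((d:ℝ)+2-β)
      = ρ ^ ((d:ℝ)+2-β) * ((2:ℝ) ^ (((k:ℝ)+1) * ((d:ℝ)+2-β)) * ((j:ℝ)+1) ^ ((d:ℝ)+2-β)) := by
    rw [Real.mul_rpow hρ.le (by positivity), Real.mul_rpow (by positivity) (by linarith),
      aux_two_pow_rpow]
    push_cast
    ring_nf
  have eρ : ρ ^ (α-((d:ℝ)+2)) * ρ ^ ((d:ℝ)+2-β) = ρ ^ (α-β) := by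
    rw [← Real.rpow_add hρ]; ring_nf
  have e2 : (2:ℝ) ^ ((k:ℝ) * (α-((d:ℝ)+2))) * (2:ℝ) ^ (((k:ℝ)+1) * ((d:ℝ)+2-β))
      = (2:ℝ) ^ ((k:ℝ)*(α-β) + ((d:ℝ)+2-β)) := by
    rw [← Real.rpow_add two_pos]; ring_nf
  have e5 : (2:ℝ) ^ ((d:ℝ)+2) * ((2:ℝ) ^ (α-β)) ^ k = (2:ℝ) ^ ((α-β)*(k:ℝ) + ((d:ℝ)+2)) := by
    rw [aux_two_rpow_nat, ← Real.rpow_add two_pos]; ring_nf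
  have hb : (2:ℝ) ^ ((k:ℝ)*(α-β) + ((d:ℝ)+2-β)) ≤ (2:ℝ) ^ ((d:ℝ)+2) * ((2:ℝ) ^ (α-β)) ^ k := by
    rw [e5]
    refine Real.rpow_le_rpow_of_exponent_le one_le_two (by nlinarith)
  have ejd : ((j:ℝ)+1) ^ ((d:ℝ)+2-β) ≤ ((j:ℝ)+1) ^ (d+2 : ℕ) := by
    rw [← Real.rpow_natCast ((j:ℝ)+1) (d+2)]
    refine Real.rpow_le_rpow_of_exponent_le hj1 (by push_cast; linarith)
  have e6 : ((2:ℝ) ^ (d+2 : ℕ) : ℝ) = (2:ℝ) ^ ((d:ℝ)+2) := by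
    rw [← Real.rpow_natCast 2 (d+2)]; norm_num
  have hJ := aux_J d j
  have emain : (ρ * (2:ℝ) ^ k) ^ (α - ((d:ℝ)+2)) * (E / (1+((j:ℝ))^2) ^ (d+2)) *
      (ρ * ((2:ℝ) ^ (k+1) * ((j:ℝ)+1))) ^ ((d:ℝ)+2-β)
      = ρ ^ (α-β) * ((2:ℝ) ^ ((k:ℝ)*(α-β) + ((d:ℝ)+2-β)) *
        (E * (((j:ℝ)+1) ^ ((d:ℝ)+2-β) / (1+(j:ℝ)^2) ^ (d+2)))) := by
    calc (ρ * (2:ℝ) ^ k) ^ (α - ((d:ℝ)+2)) * (E / (1+((j:ℝ))^2) ^ (d+2)) *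
        (ρ * ((2:ℝ) ^ (k+1) * ((j:ℝ)+1))) ^ ((d:ℝ)+2-β)
        = (ρ ^ (α-((d:ℝ)+2)) * ρ ^ ((d:ℝ)+2-β)) *
          (((2:ℝ) ^ ((k:ℝ) * (α-((d:ℝ)+2))) * (2:ℝ) ^ (((k:ℝ)+1) * ((d:ℝ)+2-β))) *
          (E / (1+(j:ℝ)^2) ^ (d+2) * ((j:ℝ)+1) ^ ((d:ℝ)+2-β))) := by
          rw [e1, e3]; ring
      _ = _ := by rw [eρ, e2]; ring
  rw [emain]
  calc ρ ^ (α-β) * ((2:ℝ) ^ ((k:ℝ)*(α-β) + ((d:ℝ)+2-β)) *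
        (E * (((j:ℝ)+1) ^ ((d:ℝ)+2-β) / (1+(j:ℝ)^2) ^ (d+2))))
      ≤ ρ ^ (α-β) * (((2:ℝ) ^ ((d:ℝ)+2) * ((2:ℝ) ^ (α-β)) ^ k) *
        (E * (((j:ℝ)+1) ^ (d+2 : ℕ) / (1+(j:ℝ)^2) ^ (d+2)))) := by
        apply mul_le_mul_of_nonneg_left _ (Real.rpow_nonneg hρ.le _)
        refine mul_le_mul hb ?_ (by positivity) (by positivity)
        refine mul_le_mul_of_nonneg_left ?_ hE.le
        exact div_le_div_of_nonneg_right ejd (by positivity)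
    _ ≤ ρ ^ (α-β) * (((2:ℝ) ^ ((d:ℝ)+2) * ((2:ℝ) ^ (α-β)) ^ k) *
        (E * ((2:ℝ) ^ (d+2 : ℕ) / ((j:ℝ)+1) ^ 2))) := by
        apply mul_le_mul_of_nonneg_left _ (Real.rpow_nonneg hρ.le _)
        apply mul_le_mul_of_nonneg_left _ (by positivity)
        exact mul_le_mul_of_nonneg_left hJ hE.le
    _ ≤ ρ ^ (α-β) * ((E * (2:ℝ) ^ ((4:ℝ) * ((d:ℝ)+2))) *
        (((2:ℝ) ^ (α-β)) ^ k * (1/((j:ℝ)+1)) ^ 2)) := by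
        apply mul_le_mul_of_nonneg_left _ (Real.rpow_nonneg hρ.le _)
        rw [e6]
        have h8 : (2:ℝ) ^ ((d:ℝ)+2) * (2:ℝ) ^ ((d:ℝ)+2) ≤ (2:ℝ) ^ ((4:ℝ)*((d:ℝ)+2)) := by
          rw [← Real.rpow_add two_pos]
          exact Real.rpow_le_rpow_of_exponent_le one_le_two (by linarith)
        calc ((2:ℝ) ^ ((d:ℝ)+2) * ((2:ℝ) ^ (α-β)) ^ k) * (E * ((2:ℝ) ^ ((d:ℝ)+2) / ((j:ℝ)+1) ^ 2))
            = (((2:ℝ) ^ (α-β)) ^ k * (1/((j:ℝ)+1)) ^ 2) *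
              (E * ((2:ℝ) ^ ((d:ℝ)+2) * (2:ℝ) ^ ((d:ℝ)+2))) := by
              rw [div_pow, one_pow]; ring
          _ ≤ (((2:ℝ) ^ (α-β)) ^ k * (1/((j:ℝ)+1)) ^ 2) * (E * (2:ℝ) ^ ((4:ℝ)*((d:ℝ)+2))) := by
              apply mul_le_mul_of_nonneg_left _ (by positivity)
              exact mul_le_mul_of_nonneg_left h8 hE.le
          _ = _ := by ring

lemma aux_termB (d : ℕ) {α β ρ : ℝ} (hα : 0 < α) (hαβ : α < β) (hβd : β ≤ (d:ℝ)+2)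
    (hρ : 0 < ρ) (k j : ℕ) :
    (ρ * (1/2) ^ (j+1)) ^ (α - ((d:ℝ)+2)) *
      (Real.exp 1 * (Nat.factorial (d+2)) / (1+((4:ℝ) ^ (k+j))) ^ (d+2)) *
      (ρ * 2 ^ (k+1)) ^ ((d:ℝ)+2-β) ≤
    ρ ^ (α-β) * ((Real.exp 1 * (Nat.factorial (d+2)) * (2:ℝ) ^ ((4:ℝ) * ((d:ℝ)+2))) *
      (((2:ℝ) ^ (-α)) ^ k * ((2:ℝ) ^ (-α)) ^ j)) := by
  set E : ℝ := Real.exp 1 * (Nat.factorial (d+2)) with hEdef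
  have hE : 0 < E := by positivity
  have hD0 : (0:ℝ) ≤ (d:ℝ)+2 := by positivity
  have hk0 : (0:ℝ) ≤ (k:ℝ) := Nat.cast_nonneg k
  have hj0 : (0:ℝ) ≤ (j:ℝ) := Nat.cast_nonneg j
  have e1 : (ρ * (1/2:ℝ) ^ (j+1)) ^ (α - ((d:ℝ)+2))
      = ρ ^ (α-((d:ℝ)+2)) * (2:ℝ) ^ (-(((j:ℝ)+1) * (α-((d:ℝ)+2)))) := by
    rw [Real.mul_rpow hρ.le (by positivity), aux_half_rpow]
    congr 2
    push_cast
    ring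
  have e3 : (ρ * (2:ℝ) ^ (k+1)) ^ ((d:ℝ)+2-β)
      = ρ ^ ((d:ℝ)+2-β) * (2:ℝ) ^ (((k:ℝ)+1) * ((d:ℝ)+2-β)) := by
    rw [Real.mul_rpow hρ.le (by positivity), aux_two_pow_rpow]
    congr 2
    push_cast
    ring
  have eρ : ρ ^ (α-((d:ℝ)+2)) * ρ ^ ((d:ℝ)+2-β) = ρ ^ (α-β) := by
    rw [← Real.rpow_add hρ]; ring_nf
  -- bound the middle factor
  have h4 : (((4:ℝ) ^ (k+j)) : ℝ) ^ (d+2 : ℕ) = (2:ℝ) ^ (2*((k:ℝ)+(j:ℝ))*((d:ℝ)+2)) := by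
    rw [show (4:ℝ) = 2 ^ 2 by norm_num, ← pow_mul, ← pow_mul,
      ← Real.rpow_natCast 2 (2*((k+j)*(d+2)))]
    congr 1
    push_cast
    ring
  have hmid : E / (1+((4:ℝ) ^ (k+j))) ^ (d+2) ≤ E * (2:ℝ) ^ (-(2*((k:ℝ)+(j:ℝ))*((d:ℝ)+2))) := by
    have hstep : ((4:ℝ) ^ (k+j)) ^ (d+2 : ℕ) ≤ (1+((4:ℝ) ^ (k+j))) ^ (d+2) :=
      pow_le_pow_left₀ (by positivity) (by linarith [pow_pos (by norm_num : (0:ℝ) < 4) (k+j)]) _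
    calc E / (1+((4:ℝ) ^ (k+j))) ^ (d+2) ≤ E / ((4:ℝ) ^ (k+j)) ^ (d+2 : ℕ) := by
          apply div_le_div_of_nonneg_left hE.le (by positivity) hstep
      _ = E * (2:ℝ) ^ (-(2*((k:ℝ)+(j:ℝ))*((d:ℝ)+2))) := by
          rw [h4, Real.rpow_neg (by norm_num), div_eq_mul_inv]
  -- assemble
  have hT1 : (0:ℝ) ≤ (ρ * (1/2:ℝ) ^ (j+1)) ^ (α - ((d:ℝ)+2)) := Real.rpow_nonneg (by positivity) _
  have hT3 : (0:ℝ) ≤ (ρ * (2:ℝ) ^ (k+1)) ^ ((d:ℝ)+2-β) := Real.rpow_nonneg (by positivity) _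
  calc (ρ * (1/2:ℝ) ^ (j+1)) ^ (α - ((d:ℝ)+2)) * (E / (1+((4:ℝ) ^ (k+j))) ^ (d+2)) *
      (ρ * (2:ℝ) ^ (k+1)) ^ ((d:ℝ)+2-β)
      ≤ (ρ * (1/2:ℝ) ^ (j+1)) ^ (α - ((d:ℝ)+2)) * (E * (2:ℝ) ^ (-(2*((k:ℝ)+(j:ℝ))*((d:ℝ)+2)))) *
        (ρ * (2:ℝ) ^ (k+1)) ^ ((d:ℝ)+2-β) := by
        apply mul_le_mul_of_nonneg_right _ hT3
        exact mul_le_mul_of_nonneg_left hmid hT1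
    _ = ρ ^ (α-β) * (E * ((2:ℝ) ^ (-(((j:ℝ)+1) * (α-((d:ℝ)+2))) + -(2*((k:ℝ)+(j:ℝ))*((d:ℝ)+2))
        + ((k:ℝ)+1) * ((d:ℝ)+2-β)))) := by
        rw [e1, e3]
        rw [show (2:ℝ) ^ (-(((j:ℝ)+1) * (α-((d:ℝ)+2))) + -(2*((k:ℝ)+(j:ℝ))*((d:ℝ)+2))
            + ((k:ℝ)+1) * ((d:ℝ)+2-β))
          = (2:ℝ) ^ (-(((j:ℝ)+1) * (α-((d:ℝ)+2)))) * (2:ℝ) ^ (-(2*((k:ℝ)+(j:ℝ))*((d:ℝ)+2)))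
            * (2:ℝ) ^ (((k:ℝ)+1) * ((d:ℝ)+2-β)) by
            rw [← Real.rpow_add two_pos, ← Real.rpow_add two_pos]]
        rw [← eρ]
        ring
    _ ≤ ρ ^ (α-β) * (E * ((2:ℝ) ^ (2*((d:ℝ)+2) + (-α)*(k:ℝ) + (-α)*(j:ℝ)))) := by
        apply mul_le_mul_of_nonneg_left _ (Real.rpow_nonneg hρ.le _)
        apply mul_le_mul_of_nonneg_left _ hE.le
        refine Real.rpow_le_rpow_of_exponent_le one_le_two ?_
        nlinarith [mul_nonneg hk0 (by linarith : (0:ℝ) ≤ (d:ℝ)+2-α),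
          mul_nonneg hj0 (by linarith : (0:ℝ) ≤ (d:ℝ)+2-α),
          mul_nonneg hk0 (by linarith : (0:ℝ) ≤ β-α), hD0]
    _ ≤ _ := by
        have esplit : (2:ℝ) ^ (2*((d:ℝ)+2) + (-α)*(k:ℝ) + (-α)*(j:ℝ))
            = (2:ℝ) ^ (2*((d:ℝ)+2)) * (((2:ℝ) ^ (-α)) ^ k * ((2:ℝ) ^ (-α)) ^ j) := by
          rw [aux_two_rpow_nat, aux_two_rpow_nat, ← Real.rpow_add two_pos, ← Real.rpow_add two_pos]
          ring_nf
        rw [esplit]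
        have h8 : (2:ℝ) ^ (2*((d:ℝ)+2)) ≤ (2:ℝ) ^ ((4:ℝ)*((d:ℝ)+2)) :=
          Real.rpow_le_rpow_of_exponent_le one_le_two (by linarith)
        calc ρ ^ (α-β) * (E * ((2:ℝ) ^ (2*((d:ℝ)+2)) * (((2:ℝ) ^ (-α)) ^ k * ((2:ℝ) ^ (-α)) ^ j)))
            = ρ ^ (α-β) * ((E * (2:ℝ) ^ (2*((d:ℝ)+2))) * (((2:ℝ) ^ (-α)) ^ k * ((2:ℝ) ^ (-α)) ^ j)) := by
              ring
          _ ≤ ρ ^ (α-β) * ((E * (2:ℝ) ^ ((4:ℝ)*((d:ℝ)+2))) * (((2:ℝ) ^ (-α)) ^ k * ((2:ℝ) ^ (-α)) ^ j)) := by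
              apply mul_le_mul_of_nonneg_left _ (Real.rpow_nonneg hρ.le _)
              apply mul_le_mul_of_nonneg_right _ (by positivity)
              exact mul_le_mul_of_nonneg_left h8 hE.le

lemma aux_half_sq (m : ℕ) : ((1/2:ℝ) ^ m) ^ 2 * (4:ℝ) ^ m = 1 := by
  rw [← pow_mul, mul_comm m 2, pow_mul, ← mul_pow]
  norm_num

lemma aux_two_sq (m : ℕ) : ((2:ℝ) ^ m) ^ 2 = (4:ℝ) ^ m := by
  rw [← pow_mul, mul_comm m 2, pow_mul]
  norm_num

lemma aux_sel1 (d : ℕ) {α ρ : ℝ} (hαd : α ≤ (d:ℝ)+2) (hρ : 0 < ρ) :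
    ∀ w : Pt d, w ∈ pCyl d ρ 0 → 0 < w.1 →
    ∃ p : ℕ × ℕ, w ∈ pCyl d (ρ * ((1/2) ^ p.1 * (2 * ((p.2:ℝ)+1)))) 0 ∧
      pKer d α w.1 ‖w.2‖ ≤ ENNReal.ofReal ((ρ * (1/2) ^ (p.1+1)) ^ (α - ((d:ℝ)+2)) *
        (Real.exp 1 * (Nat.factorial (d+2)) / (1+((p.2:ℝ))^2) ^ (d+2))) := by
  intro w hw hw1
  simp only [pCyl, mem_setOf_eq, Prod.fst_zero, Prod.snd_zero, zero_add] at hw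
  obtain ⟨hyρ, _, hsρ⟩ := hw
  have ht0 : 0 < w.1 / ρ^2 := by positivity
  have ht1 : w.1 / ρ^2 < 1 := (div_lt_one (by positivity)).2 hsρ
  obtain ⟨k, hk1, hk2⟩ := aux_dy_down (by norm_num : (1:ℝ) < 4) ht0 ht1
  have hk1' : w.1 * 4 ^ k ≤ ρ^2 := by
    rw [div_mul_eq_mul_div, div_le_one (by positivity)] at hk1
    exact hk1
  have hk2' : ρ^2 < w.1 * 4 ^ (k+1) := by
    rw [div_mul_eq_mul_div, lt_div_iff₀ (by positivity)] at hk2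
    linarith
  set j := ⌊‖w.2‖ * 2 ^ k / ρ⌋₊ with hjdef
  have hj1 : (j:ℝ) * ρ ≤ ‖w.2‖ * 2 ^ k := by
    have := Nat.floor_le (by positivity : (0:ℝ) ≤ ‖w.2‖ * 2 ^ k / ρ)
    rw [← hjdef] at this
    exact (le_div_iff₀ hρ).1 this
  have hj2 : ‖w.2‖ * 2 ^ k < ((j:ℝ)+1) * ρ := by
    have := Nat.lt_floor_add_one (‖w.2‖ * 2 ^ k / ρ)
    rw [← hjdef] at this
    exact (div_lt_iff₀ hρ).1 (by exact_mod_cast this)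
  have h2k : (0:ℝ) < 2 ^ k := by positivity
  have h4k : (0:ℝ) < 4 ^ k := by positivity
  have hhalf : (1/2:ℝ) ^ k = ((2:ℝ) ^ k)⁻¹ := by rw [one_div, inv_pow]
  have hj0 : (0:ℝ) ≤ (j:ℝ) := Nat.cast_nonneg j
  refine ⟨(k, j), ?_, ?_⟩
  · simp only [pCyl, mem_setOf_eq, Prod.fst_zero, Prod.snd_zero, zero_add]
    refine ⟨?_, le_of_lt hw1, ?_⟩
    · rw [dist_zero_left, hhalf,
        show ρ * (((2:ℝ) ^ k)⁻¹ * (2 * ((j:ℝ)+1))) = ρ * (2 * ((j:ℝ)+1)) / 2 ^ k by ring,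
        lt_div_iff₀ h2k]
      nlinarith [hj2]
    · have e2 : w.1 = (w.1 * 4 ^ k) * ((1/2:ℝ) ^ k) ^ 2 := by
        calc w.1 = w.1 * (((1/2:ℝ) ^ k) ^ 2 * 4 ^ k) := by rw [aux_half_sq, mul_one]
          _ = (w.1 * 4 ^ k) * ((1/2:ℝ) ^ k) ^ 2 := by ring
      have h5 : w.1 ≤ ρ^2 * ((1/2:ℝ) ^ k) ^ 2 := by
        rw [e2]
        exact mul_le_mul_of_nonneg_right hk1' (by positivity)
      have hpos : (0:ℝ) < ρ^2 * ((1/2:ℝ) ^ k) ^ 2 := by positivity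
      have hexp : (ρ * ((1/2:ℝ) ^ k * (2*((j:ℝ)+1)))) ^ 2
          = (ρ^2 * ((1/2:ℝ) ^ k) ^ 2) * (4*((j:ℝ)+1)^2) := by ring
      have h6 : (1:ℝ) ≤ ((j:ℝ)+1)^2 := by nlinarith [hj0]
      have h7 : (ρ^2 * ((1/2:ℝ) ^ k) ^ 2) * 4 ≤ (ρ^2 * ((1/2:ℝ) ^ k) ^ 2) * (4*((j:ℝ)+1)^2) := by
        nlinarith [hpos, h6]
      rw [hexp]
      linarith [h5, hpos, h7]
  · apply aux_pKer_le d hαd (show (0:ℝ) < ρ * (1/2) ^ (k+1) by positivity) ?_ (by positivity) ?_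
    · -- σ² ≤ s
      have hsq : (0:ℝ) < ((1/2:ℝ) ^ (k+1)) ^ 2 := by positivity
      have hmul := mul_lt_mul_of_pos_right hk2' hsq
      have e3 : w.1 * 4 ^ (k+1) * ((1/2:ℝ) ^ (k+1)) ^ 2 = w.1 := by
        calc w.1 * 4 ^ (k+1) * ((1/2:ℝ) ^ (k+1)) ^ 2
            = w.1 * (((1/2:ℝ) ^ (k+1)) ^ 2 * 4 ^ (k+1)) := by ring
          _ = w.1 := by rw [aux_half_sq, mul_one]
      calc (ρ * (1/2:ℝ) ^ (k+1)) ^ 2 = ρ^2 * ((1/2:ℝ) ^ (k+1)) ^ 2 := by ring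
        _ ≤ w.1 := by rw [← e3]; linarith [hmul]
    · -- x * s ≤ r²
      have hA : (j:ℝ)^2 * ρ^2 ≤ ‖w.2‖^2 * 4 ^ k := by
        have := mul_self_le_mul_self (by positivity : (0:ℝ) ≤ (j:ℝ) * ρ) hj1
        calc (j:ℝ)^2 * ρ^2 = ((j:ℝ)*ρ) * ((j:ℝ)*ρ) := by ring
          _ ≤ (‖w.2‖ * 2 ^ k) * (‖w.2‖ * 2 ^ k) := this
          _ = ‖w.2‖^2 * ((2:ℝ) ^ k) ^ 2 := by ring
          _ = ‖w.2‖^2 * 4 ^ k := by rw [aux_two_sq]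
      have hB : ((j:ℝ)^2 * w.1) * 4 ^ k ≤ ‖w.2‖^2 * 4 ^ k := by
        calc ((j:ℝ)^2 * w.1) * 4 ^ k = (j:ℝ)^2 * (w.1 * 4 ^ k) := by ring
          _ ≤ (j:ℝ)^2 * ρ^2 := mul_le_mul_of_nonneg_left hk1' (by positivity)
          _ ≤ ‖w.2‖^2 * 4 ^ k := hA
      exact le_of_mul_le_mul_right hB h4k

lemma aux_selA (d : ℕ) {α ρ : ℝ} (hαd : α ≤ (d:ℝ)+2) (hρ : 0 < ρ) :
    ∀ w : Pt d, w ∈ {w : Pt d | ρ^2 ≤ w.1} → 0 < w.1 →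
    ∃ p : ℕ × ℕ, w ∈ pCyl d (ρ * (2 ^ (p.1+1) * ((p.2:ℝ)+1))) 0 ∧
      pKer d α w.1 ‖w.2‖ ≤ ENNReal.ofReal ((ρ * 2 ^ p.1) ^ (α - ((d:ℝ)+2)) *
        (Real.exp 1 * (Nat.factorial (d+2)) / (1+((p.2:ℝ))^2) ^ (d+2))) := by
  intro w hw hw1
  simp only [mem_setOf_eq] at hw
  have hu : (1:ℝ) ≤ w.1 / ρ^2 := (one_le_div (by positivity)).2 hw
  obtain ⟨k, hk1, hk2⟩ := aux_dy_up (by norm_num : (1:ℝ) < 4) hu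
  have hk1' : ρ^2 * 4 ^ k ≤ w.1 := by
    have := (le_div_iff₀ (by positivity : (0:ℝ) < ρ^2)).1 hk1
    linarith
  have hk2' : w.1 < ρ^2 * 4 ^ (k+1) := by
    have := (div_lt_iff₀ (by positivity : (0:ℝ) < ρ^2)).1 hk2
    linarith
  set j := ⌊‖w.2‖ / (ρ * 2 ^ (k+1))⌋₊ with hjdef
  have hden : (0:ℝ) < ρ * 2 ^ (k+1) := by positivity
  have hj1 : (j:ℝ) * (ρ * 2 ^ (k+1)) ≤ ‖w.2‖ := by
    have := Nat.floor_le (by positivity : (0:ℝ) ≤ ‖w.2‖ / (ρ * 2 ^ (k+1)))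
    rw [← hjdef] at this
    exact (le_div_iff₀ hden).1 this
  have hj2 : ‖w.2‖ < ((j:ℝ)+1) * (ρ * 2 ^ (k+1)) := by
    have := Nat.lt_floor_add_one (‖w.2‖ / (ρ * 2 ^ (k+1)))
    rw [← hjdef] at this
    exact (div_lt_iff₀ hden).1 (by exact_mod_cast this)
  have hj0 : (0:ℝ) ≤ (j:ℝ) := Nat.cast_nonneg j
  refine ⟨(k, j), ?_, ?_⟩
  · simp only [pCyl, mem_setOf_eq, Prod.fst_zero, Prod.snd_zero, zero_add]
    refine ⟨?_, le_of_lt hw1, ?_⟩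
    · rw [dist_zero_left]
      nlinarith [hj2]
    · have hexp : (ρ * ((2:ℝ) ^ (k+1) * ((j:ℝ)+1))) ^ 2
          = (ρ^2 * 4 ^ (k+1)) * ((j:ℝ)+1)^2 := by rw [← aux_two_sq (k+1)]; ring
      have h6 : (1:ℝ) ≤ ((j:ℝ)+1)^2 := by nlinarith [hj0]
      have hpos : (0:ℝ) < ρ^2 * 4 ^ (k+1) := by positivity
      have h7 : ρ^2 * 4 ^ (k+1) ≤ (ρ^2 * 4 ^ (k+1)) * ((j:ℝ)+1)^2 :=
        le_mul_of_one_le_right hpos.le h6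
      rw [hexp]
      linarith [hk2', h7]
  · apply aux_pKer_le d hαd (show (0:ℝ) < ρ * 2 ^ k by positivity) ?_ (by positivity) ?_
    · calc (ρ * (2:ℝ) ^ k) ^ 2 = ρ^2 * ((2:ℝ) ^ k) ^ 2 := by ring
        _ = ρ^2 * 4 ^ k := by rw [aux_two_sq]
        _ ≤ w.1 := hk1'
    · have hA : (j:ℝ)^2 * (ρ^2 * 4 ^ (k+1)) ≤ ‖w.2‖^2 := by
        have := mul_self_le_mul_self (by positivity : (0:ℝ) ≤ (j:ℝ) * (ρ * 2 ^ (k+1))) hj1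
        calc (j:ℝ)^2 * (ρ^2 * 4 ^ (k+1)) = ((j:ℝ) * (ρ * 2 ^ (k+1))) * ((j:ℝ) * (ρ * 2 ^ (k+1))) := by
              rw [← aux_two_sq (k+1)]; ring
          _ ≤ ‖w.2‖ * ‖w.2‖ := this
          _ = ‖w.2‖^2 := by ring
      calc (j:ℝ)^2 * w.1 ≤ (j:ℝ)^2 * (ρ^2 * 4 ^ (k+1)) :=
            mul_le_mul_of_nonneg_left hk2'.le (by positivity)
        _ ≤ ‖w.2‖^2 := hA

lemma aux_selB (d : ℕ) {α ρ : ℝ} (hαd : α ≤ (d:ℝ)+2) (hρ : 0 < ρ) :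
    ∀ w : Pt d, w ∈ {w : Pt d | ρ ≤ ‖w.2‖ ∧ w.1 < ρ^2} → 0 < w.1 →
    ∃ p : ℕ × ℕ, w ∈ pCyl d (ρ * 2 ^ (p.1+1)) 0 ∧
      pKer d α w.1 ‖w.2‖ ≤ ENNReal.ofReal ((ρ * (1/2) ^ (p.2+1)) ^ (α - ((d:ℝ)+2)) *
        (Real.exp 1 * (Nat.factorial (d+2)) / (1+((4:ℝ) ^ (p.1+p.2))) ^ (d+2))) := by
  intro w hw hw1
  obtain ⟨hyρ, hsρ⟩ := hw
  have hu : (1:ℝ) ≤ ‖w.2‖ / ρ := (one_le_div hρ).2 hyρ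
  obtain ⟨k, hk1, hk2⟩ := aux_dy_up (by norm_num : (1:ℝ) < 2) hu
  have hk1' : ρ * 2 ^ k ≤ ‖w.2‖ := by
    have := (le_div_iff₀ hρ).1 hk1
    linarith
  have hk2' : ‖w.2‖ < ρ * 2 ^ (k+1) := by
    have := (div_lt_iff₀ hρ).1 hk2
    linarith
  have ht0 : 0 < w.1 / ρ^2 := by positivity
  have ht1 : w.1 / ρ^2 < 1 := (div_lt_one (by positivity)).2 hsρ
  obtain ⟨j, hj1, hj2⟩ := aux_dy_down (by norm_num : (1:ℝ) < 4) ht0 ht1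
  have hj1' : w.1 * 4 ^ j ≤ ρ^2 := by
    rw [div_mul_eq_mul_div, div_le_one (by positivity)] at hj1
    exact hj1
  have hj2' : ρ^2 < w.1 * 4 ^ (j+1) := by
    rw [div_mul_eq_mul_div, lt_div_iff₀ (by positivity)] at hj2
    linarith
  refine ⟨(k, j), ?_, ?_⟩
  · simp only [pCyl, mem_setOf_eq, Prod.fst_zero, Prod.snd_zero, zero_add]
    refine ⟨?_, le_of_lt hw1, ?_⟩
    · rw [dist_zero_left]; exact hk2'
    · have h41 : (ρ * (2:ℝ) ^ (k+1)) ^ 2 = ρ^2 * 4 ^ (k+1) := by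
        rw [← aux_two_sq (k+1)]; ring
      have h42 : (1:ℝ) ≤ (4:ℝ) ^ (k+1) := by
        calc (1:ℝ) = 1 ^ (k+1) := (one_pow _).symm
          _ ≤ 4 ^ (k+1) := pow_le_pow_left₀ (by norm_num) (by norm_num) _
      rw [h41]
      nlinarith [hsρ, h42, sq_nonneg ρ, mul_nonneg (sq_nonneg ρ) (by linarith : (0:ℝ) ≤ 4 ^ (k+1) - 1)]
  · apply aux_pKer_le d hαd (show (0:ℝ) < ρ * (1/2) ^ (j+1) by positivity) ?_ (by positivity) ?_
    · have hsq : (0:ℝ) < ((1/2:ℝ) ^ (j+1)) ^ 2 := by positivity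
      have hmul := mul_lt_mul_of_pos_right hj2' hsq
      have e3 : w.1 * 4 ^ (j+1) * ((1/2:ℝ) ^ (j+1)) ^ 2 = w.1 := by
        calc w.1 * 4 ^ (j+1) * ((1/2:ℝ) ^ (j+1)) ^ 2
            = w.1 * (((1/2:ℝ) ^ (j+1)) ^ 2 * 4 ^ (j+1)) := by ring
          _ = w.1 := by rw [aux_half_sq, mul_one]
      calc (ρ * (1/2:ℝ) ^ (j+1)) ^ 2 = ρ^2 * ((1/2:ℝ) ^ (j+1)) ^ 2 := by ring
        _ ≤ w.1 := by rw [← e3]; linarith [hmul]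
    · have hyk : ρ^2 * 4 ^ k ≤ ‖w.2‖^2 := by
        have := mul_self_le_mul_self (by positivity : (0:ℝ) ≤ ρ * 2 ^ k) hk1'
        calc ρ^2 * 4 ^ k = (ρ * 2 ^ k) * (ρ * 2 ^ k) := by rw [← aux_two_sq k]; ring
          _ ≤ ‖w.2‖ * ‖w.2‖ := this
          _ = ‖w.2‖^2 := by ring
      calc (4:ℝ) ^ (k+j) * w.1 = (4:ℝ) ^ k * (w.1 * 4 ^ j) := by rw [pow_add]; ring
        _ ≤ (4:ℝ) ^ k * ρ^2 := mul_le_mul_of_nonneg_left hj1' (by positivity)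
        _ ≤ ‖w.2‖^2 := by rw [mul_comm]; exact hyk

lemma aux_tsum_package {c r : ℕ × ℕ → ℝ≥0∞} {P A : ℝ≥0∞} {g h : ℕ → ℝ≥0∞}
    (hterm : ∀ k j : ℕ, c (k, j) * r (k, j) ≤ P * (A * (g k * h j))) :
    ∑' p : ℕ × ℕ, c p * r p ≤ P * (A * ((∑' k, g k) * (∑' j, h j))) := by
  calc ∑' p : ℕ × ℕ, c p * r p ≤ ∑' p : ℕ × ℕ, (P * A) * (g p.1 * h p.2) :=
      ENNReal.tsum_le_tsum (fun p => by rw [mul_assoc]; exact hterm p.1 p.2)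
    _ = (P * A) * ∑' p : ℕ × ℕ, g p.1 * h p.2 := ENNReal.tsum_mul_left
    _ = (P * A) * ((∑' k, g k) * (∑' j, h j)) := by
        rw [ENNReal.tsum_prod']
        congr 1
        calc ∑' (k) (j), g k * h j = ∑' k, g k * ∑' j, h j := by
              congr 1; funext k; exact ENNReal.tsum_mul_left
          _ = (∑' k, g k) * (∑' j, h j) := ENNReal.tsum_mul_right
    _ = P * (A * ((∑' k, g k) * (∑' j, h j))) := by rw [mul_assoc]

lemma aux_geom_sum {q : ℝ} (h0 : 0 ≤ q) :
    ∑' k : ℕ, ENNReal.ofReal (q ^ k) = (1 - ENNReal.ofReal q)⁻¹ := by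
  have : ∀ k : ℕ, ENNReal.ofReal (q ^ k) = (ENNReal.ofReal q) ^ k :=
    fun k => ENNReal.ofReal_pow h0 k
  simp_rw [this]
  exact ENNReal.tsum_geometric _

lemma aux_geom_ne_top {q : ℝ} (h1 : q < 1) : ((1 : ℝ≥0∞) - ENNReal.ofReal q)⁻¹ ≠ ⊤ := by
  rw [Ne, ENNReal.inv_eq_top, tsub_eq_zero_iff_le]
  exact not_le.2 (ENNReal.ofReal_lt_one.2 h1)

lemma aux_U_ne_top : (∑' j : ℕ, ENNReal.ofReal ((1/((j:ℝ)+1)) ^ 2)) ≠ ⊤ := by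
  have hsum : Summable (fun j : ℕ => (1/((j:ℝ)+1)) ^ 2) := by
    have h := Real.summable_one_div_nat_pow.mpr (le_refl 2)
    have h2 := (summable_nat_add_iff 1).mpr h
    apply h2.congr
    intro j
    push_cast
    rw [div_pow, one_pow]
  rw [← ENNReal.ofReal_tsum_of_nonneg (fun j => by positivity) hsum]
  exact ENNReal.ofReal_ne_top

lemma aux_split (d : ℕ) (α : ℝ) (f : Pt d → ℝ≥0∞) (hf : Measurable f) {ρ : ℝ} (hρ : 0 < ρ) :
    Palpha d α ((pCyl d ρ 0)ᶜ.indicator f) 0 ≤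
      Palpha d α ({w : Pt d | ρ^2 ≤ w.1}.indicator f) 0 +
      Palpha d α ({w : Pt d | ρ ≤ ‖w.2‖ ∧ w.1 < ρ^2}.indicator f) 0 := by
  have hSA : MeasurableSet {w : Pt d | ρ^2 ≤ w.1} :=
    measurableSet_le measurable_const measurable_fst
  have hSB : MeasurableSet {w : Pt d | ρ ≤ ‖w.2‖ ∧ w.1 < ρ^2} :=
    (measurableSet_le measurable_const measurable_snd.norm).inter
      (measurableSet_lt measurable_fst measurable_const)
  simp only [Palpha, Prod.fst_zero, Prod.snd_zero, zero_add, Prod.mk.eta]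
  rw [← lintegral_add_left (f := fun w => pKer d α w.1 ‖w.2‖ * {w : Pt d | ρ^2 ≤ w.1}.indicator f w)
    ((aux_measurable_pKer d α).mul (hf.indicator hSA))]
  apply lintegral_mono
  intro w
  show pKer d α w.1 ‖w.2‖ * (pCyl d ρ 0)ᶜ.indicator f w ≤
    pKer d α w.1 ‖w.2‖ * {w : Pt d | ρ^2 ≤ w.1}.indicator f w +
    pKer d α w.1 ‖w.2‖ * {w : Pt d | ρ ≤ ‖w.2‖ ∧ w.1 < ρ^2}.indicator f w
  by_cases hw : w ∈ (pCyl d ρ 0)ᶜ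
  · rw [indicator_of_mem hw]
    by_cases hw1 : 0 < w.1
    · have hw' : ¬(dist (0:Ed d) w.2 < ρ ∧ (0:ℝ) ≤ w.1 ∧ w.1 < 0 + ρ^2) := by
        intro hcon
        exact hw hcon
      by_cases hA : ρ^2 ≤ w.1
      · have hmem : w ∈ {w : Pt d | ρ^2 ≤ w.1} := hA
        rw [indicator_of_mem hmem]
        exact le_add_right le_rfl
      · push_neg at hA
        have hmemB : w ∈ {w : Pt d | ρ ≤ ‖w.2‖ ∧ w.1 < ρ^2} := by
          refine ⟨?_, hA⟩
          by_contra hcon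
          push_neg at hcon
          exact hw' ⟨by rwa [dist_zero_left], hw1.le, by rw [zero_add]; exact hA⟩
        rw [indicator_of_mem hmemB]
        exact le_add_self
    · have h0 : pKer d α w.1 ‖w.2‖ = 0 := by rw [pKer, if_neg hw1]
      simp [h0]
  · simp [indicator_of_notMem hw]


/-- Lemma 2.2, (2.2): for `α ∈ (0,β)`, `β ∈ (0, d+2]` there is `N = N(d,α,β)`
such that `P_α(1_{C_ρ} f)(0) ≤ N ρ^α M f(0)` and `P_α(1_{C_ρ^c} f)(0) ≤ N ρ^{α-β} M_β f(0)`. -/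
theorem stmt1 (d : ℕ) (hd : 1 ≤ d) (α β : ℝ) (hα : 0 < α) (hαβ : α < β)
    (hβ : β ≤ (d : ℝ) + 2) :
    ∃ N : ℝ, 0 < N ∧ ∀ f : Pt d → ℝ≥0∞, Measurable f → ∀ ρ : ℝ, 0 < ρ →
      Palpha d α ((pCyl d ρ 0).indicator f) 0 ≤
        ENNReal.ofReal (N * ρ ^ α) * Mbeta d 0 f 0 ∧
      Palpha d α ((pCyl d ρ 0)ᶜ.indicator f) 0 ≤
        ENNReal.ofReal (N * ρ ^ (α - β)) * Mbeta d β f 0 := by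
  have hαd : α ≤ (d : ℝ) + 2 := le_trans hαβ.le hβ
  have hA0 : (0:ℝ) ≤ Real.exp 1 * (Nat.factorial (d+2)) * (2:ℝ) ^ ((4:ℝ) * ((d:ℝ)+2)) := by
    positivity
  have hq10 : (0:ℝ) ≤ (2:ℝ) ^ (-α) := Real.rpow_nonneg (by norm_num) _
  have hq11 : (2:ℝ) ^ (-α) < 1 :=
    Real.rpow_lt_one_of_one_lt_of_neg one_lt_two (by linarith)
  have hq20 : (0:ℝ) ≤ (2:ℝ) ^ (α - β) := Real.rpow_nonneg (by norm_num) _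
  have hq21 : (2:ℝ) ^ (α - β) < 1 :=
    Real.rpow_lt_one_of_one_lt_of_neg one_lt_two (by linarith)
  -- the ENNReal constant
  set T : ℝ≥0∞ :=
    (ENNReal.ofReal (Real.exp 1 * (Nat.factorial (d+2)) * (2:ℝ) ^ ((4:ℝ) * ((d:ℝ)+2))) *
      ((∑' k : ℕ, ENNReal.ofReal (((2:ℝ) ^ (-α)) ^ k)) *
       (∑' j : ℕ, ENNReal.ofReal ((1/((j:ℝ)+1)) ^ 2)))) * Evb d +
    ((ENNReal.ofReal (Real.exp 1 * (Nat.factorial (d+2)) * (2:ℝ) ^ ((4:ℝ) * ((d:ℝ)+2))) *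
      ((∑' k : ℕ, ENNReal.ofReal (((2:ℝ) ^ (α-β)) ^ k)) *
       (∑' j : ℕ, ENNReal.ofReal ((1/((j:ℝ)+1)) ^ 2)))) * Evb d +
     (ENNReal.ofReal (Real.exp 1 * (Nat.factorial (d+2)) * (2:ℝ) ^ ((4:ℝ) * ((d:ℝ)+2))) *
      ((∑' k : ℕ, ENNReal.ofReal (((2:ℝ) ^ (-α)) ^ k)) *
       (∑' j : ℕ, ENNReal.ofReal (((2:ℝ) ^ (-α)) ^ j)))) * Evb d) with hTdef
  have hTne : T ≠ ⊤ := by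
    rw [hTdef, aux_geom_sum hq10, aux_geom_sum hq20]
    have h1 := aux_geom_ne_top hq11
    have h2 := aux_geom_ne_top hq21
    have h3 := aux_U_ne_top
    have h4 := aux_Evb_ne_top d
    refine ENNReal.add_ne_top.2 ⟨?_, ENNReal.add_ne_top.2 ⟨?_, ?_⟩⟩ <;>
      exact ENNReal.mul_ne_top
        (ENNReal.mul_ne_top ENNReal.ofReal_ne_top
          (ENNReal.mul_ne_top (by assumption) (by assumption))) h4
  set N : ℝ := T.toReal + 1 with hNdef
  have hN : 0 < N := by
    have := ENNReal.toReal_nonneg (a := T)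
    rw [hNdef]; linarith
  have hTN : T ≤ ENNReal.ofReal N := by
    calc T = ENNReal.ofReal T.toReal := (ENNReal.ofReal_toReal hTne).symm
      _ ≤ ENNReal.ofReal N := ENNReal.ofReal_le_ofReal (by rw [hNdef]; linarith)
  refine ⟨N, hN, ?_⟩
  intro f hf ρ hρ
  constructor
  · -- part 1
    have h1 := aux_master d hd α 0 f hf (pCyl d ρ 0)
      (c := fun p : ℕ × ℕ => ENNReal.ofReal ((ρ * (1/2) ^ (p.1+1)) ^ (α - ((d:ℝ)+2)) *
        (Real.exp 1 * (Nat.factorial (d+2)) / (1+((p.2:ℝ))^2) ^ (d+2))))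
      (R := fun p : ℕ × ℕ => ρ * ((1/2) ^ p.1 * (2 * ((p.2:ℝ)+1))))
      (fun p => by positivity)
      (aux_sel1 d hαd hρ)
    simp only [sub_zero] at h1
    have hterm : ∀ k j : ℕ,
        ENNReal.ofReal ((ρ * (1/2) ^ (k+1)) ^ (α - ((d:ℝ)+2)) *
          (Real.exp 1 * (Nat.factorial (d+2)) / (1+((j:ℝ))^2) ^ (d+2))) *
        ENNReal.ofReal ((ρ * ((1/2) ^ k * (2 * ((j:ℝ)+1)))) ^ ((d:ℝ)+2)) ≤
        ENNReal.ofReal (ρ ^ α) *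
          (ENNReal.ofReal (Real.exp 1 * (Nat.factorial (d+2)) * (2:ℝ) ^ ((4:ℝ) * ((d:ℝ)+2))) *
          (ENNReal.ofReal (((2:ℝ) ^ (-α)) ^ k) * ENNReal.ofReal ((1/((j:ℝ)+1)) ^ 2))) := by
      intro k j
      rw [← ENNReal.ofReal_mul (by positivity)]
      refine le_trans (ENNReal.ofReal_le_ofReal (aux_term1 d hα hρ k j)) ?_
      rw [ENNReal.ofReal_mul (by positivity : (0:ℝ) ≤ ρ ^ α),
        ENNReal.ofReal_mul hA0,
        ENNReal.ofReal_mul (by positivity : (0:ℝ) ≤ ((2:ℝ) ^ (-α)) ^ k)]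
    have hsum := aux_tsum_package
      (c := fun p : ℕ × ℕ => ENNReal.ofReal ((ρ * (1/2) ^ (p.1+1)) ^ (α - ((d:ℝ)+2)) *
        (Real.exp 1 * (Nat.factorial (d+2)) / (1+((p.2:ℝ))^2) ^ (d+2))))
      (r := fun p : ℕ × ℕ => ENNReal.ofReal ((ρ * ((1/2) ^ p.1 * (2 * ((p.2:ℝ)+1)))) ^ ((d:ℝ)+2)))
      (P := ENNReal.ofReal (ρ ^ α))
      (A := ENNReal.ofReal (Real.exp 1 * (Nat.factorial (d+2)) * (2:ℝ) ^ ((4:ℝ) * ((d:ℝ)+2))))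
      (g := fun k : ℕ => ENNReal.ofReal (((2:ℝ) ^ (-α)) ^ k))
      (h := fun j : ℕ => ENNReal.ofReal ((1/((j:ℝ)+1)) ^ 2))
      hterm
    refine le_trans h1 (le_trans (mul_le_mul_left hsum _) ?_)
    have hTpart : (ENNReal.ofReal (Real.exp 1 * (Nat.factorial (d+2)) * (2:ℝ) ^ ((4:ℝ) * ((d:ℝ)+2))) *
        ((∑' k : ℕ, ENNReal.ofReal (((2:ℝ) ^ (-α)) ^ k)) *
         (∑' j : ℕ, ENNReal.ofReal ((1/((j:ℝ)+1)) ^ 2)))) * Evb d ≤ ENNReal.ofReal N :=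
      le_trans (by rw [hTdef]; exact le_self_add) hTN
    calc ENNReal.ofReal (ρ ^ α) *
          (ENNReal.ofReal (Real.exp 1 * (Nat.factorial (d+2)) * (2:ℝ) ^ ((4:ℝ) * ((d:ℝ)+2))) *
          ((∑' k : ℕ, ENNReal.ofReal (((2:ℝ) ^ (-α)) ^ k)) *
           (∑' j : ℕ, ENNReal.ofReal ((1/((j:ℝ)+1)) ^ 2)))) * (Evb d * Mbeta d 0 f 0)
        = ((ENNReal.ofReal (Real.exp 1 * (Nat.factorial (d+2)) * (2:ℝ) ^ ((4:ℝ) * ((d:ℝ)+2))) *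
          ((∑' k : ℕ, ENNReal.ofReal (((2:ℝ) ^ (-α)) ^ k)) *
           (∑' j : ℕ, ENNReal.ofReal ((1/((j:ℝ)+1)) ^ 2)))) * Evb d) *
          (ENNReal.ofReal (ρ ^ α) * Mbeta d 0 f 0) := by ring
      _ ≤ ENNReal.ofReal N * (ENNReal.ofReal (ρ ^ α) * Mbeta d 0 f 0) :=
          mul_le_mul_left hTpart _
      _ = ENNReal.ofReal (N * ρ ^ α) * Mbeta d 0 f 0 := by
          rw [← mul_assoc, ← ENNReal.ofReal_mul hN.le]
  · -- part 2
    refine le_trans (aux_split d α f hf hρ) ?_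
    -- region A
    have hA1 := aux_master d hd α β f hf {w : Pt d | ρ^2 ≤ w.1}
      (c := fun p : ℕ × ℕ => ENNReal.ofReal ((ρ * 2 ^ p.1) ^ (α - ((d:ℝ)+2)) *
        (Real.exp 1 * (Nat.factorial (d+2)) / (1+((p.2:ℝ))^2) ^ (d+2))))
      (R := fun p : ℕ × ℕ => ρ * (2 ^ (p.1+1) * ((p.2:ℝ)+1)))
      (fun p => by positivity)
      (aux_selA d hαd hρ)
    have htermA : ∀ k j : ℕ,
        ENNReal.ofReal ((ρ * 2 ^ k) ^ (α - ((d:ℝ)+2)) *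
          (Real.exp 1 * (Nat.factorial (d+2)) / (1+((j:ℝ))^2) ^ (d+2))) *
        ENNReal.ofReal ((ρ * (2 ^ (k+1) * ((j:ℝ)+1))) ^ ((d:ℝ)+2-β)) ≤
        ENNReal.ofReal (ρ ^ (α-β)) *
          (ENNReal.ofReal (Real.exp 1 * (Nat.factorial (d+2)) * (2:ℝ) ^ ((4:ℝ) * ((d:ℝ)+2))) *
          (ENNReal.ofReal (((2:ℝ) ^ (α-β)) ^ k) * ENNReal.ofReal ((1/((j:ℝ)+1)) ^ 2))) := by
      intro k j
      rw [← ENNReal.ofReal_mul (by positivity)]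
      refine le_trans (ENNReal.ofReal_le_ofReal (aux_termA d hα hαβ hβ hρ k j)) ?_
      rw [ENNReal.ofReal_mul (by positivity : (0:ℝ) ≤ ρ ^ (α-β)),
        ENNReal.ofReal_mul hA0,
        ENNReal.ofReal_mul (by positivity : (0:ℝ) ≤ ((2:ℝ) ^ (α-β)) ^ k)]
    have hsumA := aux_tsum_package
      (c := fun p : ℕ × ℕ => ENNReal.ofReal ((ρ * 2 ^ p.1) ^ (α - ((d:ℝ)+2)) *
        (Real.exp 1 * (Nat.factorial (d+2)) / (1+((p.2:ℝ))^2) ^ (d+2))))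
      (r := fun p : ℕ × ℕ => ENNReal.ofReal ((ρ * (2 ^ (p.1+1) * ((p.2:ℝ)+1))) ^ ((d:ℝ)+2-β)))
      (P := ENNReal.ofReal (ρ ^ (α-β)))
      (A := ENNReal.ofReal (Real.exp 1 * (Nat.factorial (d+2)) * (2:ℝ) ^ ((4:ℝ) * ((d:ℝ)+2))))
      (g := fun k : ℕ => ENNReal.ofReal (((2:ℝ) ^ (α-β)) ^ k))
      (h := fun j : ℕ => ENNReal.ofReal ((1/((j:ℝ)+1)) ^ 2))
      htermA
    -- region B
    have hB1 := aux_master d hd α β f hf {w : Pt d | ρ ≤ ‖w.2‖ ∧ w.1 < ρ^2}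
      (c := fun p : ℕ × ℕ => ENNReal.ofReal ((ρ * (1/2) ^ (p.2+1)) ^ (α - ((d:ℝ)+2)) *
        (Real.exp 1 * (Nat.factorial (d+2)) / (1+((4:ℝ) ^ (p.1+p.2))) ^ (d+2))))
      (R := fun p : ℕ × ℕ => ρ * 2 ^ (p.1+1))
      (fun p => by positivity)
      (aux_selB d hαd hρ)
    have htermB : ∀ k j : ℕ,
        ENNReal.ofReal ((ρ * (1/2) ^ (j+1)) ^ (α - ((d:ℝ)+2)) *
          (Real.exp 1 * (Nat.factorial (d+2)) / (1+((4:ℝ) ^ (k+j))) ^ (d+2))) *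
        ENNReal.ofReal ((ρ * 2 ^ (k+1)) ^ ((d:ℝ)+2-β)) ≤
        ENNReal.ofReal (ρ ^ (α-β)) *
          (ENNReal.ofReal (Real.exp 1 * (Nat.factorial (d+2)) * (2:ℝ) ^ ((4:ℝ) * ((d:ℝ)+2))) *
          (ENNReal.ofReal (((2:ℝ) ^ (-α)) ^ k) * ENNReal.ofReal (((2:ℝ) ^ (-α)) ^ j))) := by
      intro k j
      rw [← ENNReal.ofReal_mul (by positivity)]
      refine le_trans (ENNReal.ofReal_le_ofReal (aux_termB d hα hαβ hβ hρ k j)) ?_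
      rw [ENNReal.ofReal_mul (by positivity : (0:ℝ) ≤ ρ ^ (α-β)),
        ENNReal.ofReal_mul hA0,
        ENNReal.ofReal_mul (by positivity : (0:ℝ) ≤ ((2:ℝ) ^ (-α)) ^ k)]
    have hsumB := aux_tsum_package
      (c := fun p : ℕ × ℕ => ENNReal.ofReal ((ρ * (1/2) ^ (p.2+1)) ^ (α - ((d:ℝ)+2)) *
        (Real.exp 1 * (Nat.factorial (d+2)) / (1+((4:ℝ) ^ (p.1+p.2))) ^ (d+2))))
      (r := fun p : ℕ × ℕ => ENNReal.ofReal ((ρ * 2 ^ (p.1+1)) ^ ((d:ℝ)+2-β)))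
      (P := ENNReal.ofReal (ρ ^ (α-β)))
      (A := ENNReal.ofReal (Real.exp 1 * (Nat.factorial (d+2)) * (2:ℝ) ^ ((4:ℝ) * ((d:ℝ)+2))))
      (g := fun k : ℕ => ENNReal.ofReal (((2:ℝ) ^ (-α)) ^ k))
      (h := fun j : ℕ => ENNReal.ofReal (((2:ℝ) ^ (-α)) ^ j))
      htermB
    have hfinA := le_trans hA1 (mul_le_mul_left hsumA (Evb d * Mbeta d β f 0))
    have hfinB := le_trans hB1 (mul_le_mul_left hsumB (Evb d * Mbeta d β f 0))
    refine le_trans (add_le_add hfinA hfinB) ?_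
    have hTpart2 : (ENNReal.ofReal (Real.exp 1 * (Nat.factorial (d+2)) * (2:ℝ) ^ ((4:ℝ) * ((d:ℝ)+2))) *
        ((∑' k : ℕ, ENNReal.ofReal (((2:ℝ) ^ (α-β)) ^ k)) *
         (∑' j : ℕ, ENNReal.ofReal ((1/((j:ℝ)+1)) ^ 2)))) * Evb d +
        (ENNReal.ofReal (Real.exp 1 * (Nat.factorial (d+2)) * (2:ℝ) ^ ((4:ℝ) * ((d:ℝ)+2))) *
        ((∑' k : ℕ, ENNReal.ofReal (((2:ℝ) ^ (-α)) ^ k)) *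
         (∑' j : ℕ, ENNReal.ofReal (((2:ℝ) ^ (-α)) ^ j)))) * Evb d ≤ ENNReal.ofReal N :=
      le_trans (by rw [hTdef]; exact le_add_self) hTN
    calc ENNReal.ofReal (ρ ^ (α-β)) *
          (ENNReal.ofReal (Real.exp 1 * (Nat.factorial (d+2)) * (2:ℝ) ^ ((4:ℝ) * ((d:ℝ)+2))) *
          ((∑' k : ℕ, ENNReal.ofReal (((2:ℝ) ^ (α-β)) ^ k)) *
           (∑' j : ℕ, ENNReal.ofReal ((1/((j:ℝ)+1)) ^ 2)))) * (Evb d * Mbeta d β f 0) +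
         ENNReal.ofReal (ρ ^ (α-β)) *
          (ENNReal.ofReal (Real.exp 1 * (Nat.factorial (d+2)) * (2:ℝ) ^ ((4:ℝ) * ((d:ℝ)+2))) *
          ((∑' k : ℕ, ENNReal.ofReal (((2:ℝ) ^ (-α)) ^ k)) *
           (∑' j : ℕ, ENNReal.ofReal (((2:ℝ) ^ (-α)) ^ j)))) * (Evb d * Mbeta d β f 0)
        = ((ENNReal.ofReal (Real.exp 1 * (Nat.factorial (d+2)) * (2:ℝ) ^ ((4:ℝ) * ((d:ℝ)+2))) *
          ((∑' k : ℕ, ENNReal.ofReal (((2:ℝ) ^ (α-β)) ^ k)) *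
           (∑' j : ℕ, ENNReal.ofReal ((1/((j:ℝ)+1)) ^ 2)))) * Evb d +
          (ENNReal.ofReal (Real.exp 1 * (Nat.factorial (d+2)) * (2:ℝ) ^ ((4:ℝ) * ((d:ℝ)+2))) *
          ((∑' k : ℕ, ENNReal.ofReal (((2:ℝ) ^ (-α)) ^ k)) *
           (∑' j : ℕ, ENNReal.ofReal (((2:ℝ) ^ (-α)) ^ j)))) * Evb d) *
          (ENNReal.ofReal (ρ ^ (α-β)) * Mbeta d β f 0) := by ring
      _ ≤ ENNReal.ofReal N * (ENNReal.ofReal (ρ ^ (α-β)) * Mbeta d β f 0) :=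
          mul_le_mul_left hTpart2 _
      _ = ENNReal.ofReal (N * ρ ^ (α-β)) * Mbeta d β f 0 := by
          rw [← mul_assoc, ← ENNReal.ofReal_mul hN.le]
end
end

section
/- Let d ≥ 1, α ∈ (0, β), β ∈ (0, d+2]. There exists a constant N = N(d, α, β) such that for every measurable f ≥ 0 on ℝ^{d+1} one has the pointwise inequality P_α f ≤ N (M_β f)^{α/β} (M f)^{1-α/β} on ℝ^{d+1}. -/
open MeasureTheory Set ENNReal Filter

noncomputable section

instance (d : ℕ) : (volume : Measure (Pt d)).IsAddLeftInvariant := by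
  rw [Measure.volume_eq_prod]; infer_instance

lemma pCyl_eq (d : ℕ) (ρ : ℝ) (z : Pt d) :
    pCyl d ρ z = (Set.Ico z.1 (z.1 + ρ ^ 2)) ×ˢ (Metric.ball z.2 ρ) := by
  ext w
  simp only [pCyl, mem_setOf_eq, Set.mem_prod, Set.mem_Ico, Metric.mem_ball, dist_comm]
  tauto

lemma measurableSet_pCyl (d : ℕ) (ρ : ℝ) (z : Pt d) : MeasurableSet (pCyl d ρ z) := by
  rw [pCyl_eq]; exact measurableSet_Ico.prod measurableSet_ball

lemma volume_pCyl (d : ℕ) (hd : 1 ≤ d) (ρ : ℝ) (hρ : 0 ≤ ρ) (z : Pt d) :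
    volume (pCyl d ρ z) =
      ENNReal.ofReal (ρ ^ 2) * (ENNReal.ofReal (ρ ^ d) * volume (Metric.ball (0 : Ed d) 1)) := by
  haveI : Nontrivial (Ed d) := Module.nontrivial_of_finrank_pos
    (by rw [finrank_euclideanSpace, Fintype.card_fin]; omega : 0 < Module.finrank ℝ (Ed d))
  rw [pCyl_eq, Measure.volume_eq_prod, Measure.prod_prod, Real.volume_Ico, add_sub_cancel_left,
    Measure.addHaar_ball volume z.2 hρ, finrank_euclideanSpace, Fintype.card_fin]

lemma volume_pCyl_pos (d : ℕ) (hd : 1 ≤ d) (ρ : ℝ) (hρ : 0 < ρ) (z : Pt d) :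
    0 < volume (pCyl d ρ z) := by
  rw [volume_pCyl d hd ρ hρ.le z]
  have h1 : 0 < volume (Metric.ball (0 : Ed d) 1) := Metric.measure_ball_pos _ _ one_pos
  have h2 : (0:ℝ≥0∞) < ENNReal.ofReal (ρ ^ 2) := ENNReal.ofReal_pos.2 (by positivity)
  have h3 : (0:ℝ≥0∞) < ENNReal.ofReal (ρ ^ d) := ENNReal.ofReal_pos.2 (by positivity)
  exact ENNReal.mul_pos h2.ne' (ENNReal.mul_pos h3.ne' h1.ne').ne'

lemma volume_pCyl_ne_top (d : ℕ) (hd : 1 ≤ d) (ρ : ℝ) (hρ : 0 ≤ ρ) (z : Pt d) :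
    volume (pCyl d ρ z) ≠ ⊤ := by
  rw [volume_pCyl d hd ρ hρ z]
  exact ENNReal.mul_ne_top ENNReal.ofReal_ne_top
    (ENNReal.mul_ne_top ENNReal.ofReal_ne_top measure_ball_lt_top.ne)

lemma lintegral_pCyl_translate (d : ℕ) (ρ : ℝ) (z : Pt d) (f : Pt d → ℝ≥0∞) :
    ∫⁻ w in pCyl d ρ ((0:ℝ), (0:Ed d)), f (z + w) = ∫⁻ w in pCyl d ρ z, f w := by
  have hmem : ∀ w : Pt d, w ∈ pCyl d ρ ((0:ℝ), (0:Ed d)) ↔ z + w ∈ pCyl d ρ z := by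
    intro w
    simp only [pCyl, mem_setOf_eq, Prod.fst_add, Prod.snd_add, dist_self_add_right,
      dist_zero_left, le_add_iff_nonneg_right, add_lt_add_iff_left, zero_add]
  rw [← lintegral_indicator (measurableSet_pCyl d ρ _),
      ← lintegral_indicator (measurableSet_pCyl d ρ z),
      ← lintegral_add_left_eq_self (fun w => (pCyl d ρ z).indicator f w) z]
  congr 1; funext w
  by_cases h : w ∈ pCyl d ρ ((0:ℝ), (0:Ed d))
  · rw [Set.indicator_of_mem h, Set.indicator_of_mem ((hmem w).1 h)]
  · rw [Set.indicator_of_notMem h, Set.indicator_of_notMem (fun hc => h ((hmem w).2 hc))]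

lemma real_ker_bound (k : ℝ) (hk : 0 < k) (s y R : ℝ) (hs : 0 < s) (hR : 0 < R) (hy : 0 ≤ y)
    (h : R ^ 2 ≤ s ∨ R ≤ y) :
    s ^ (-k) * Real.exp (-(y ^ 2) / s) ≤
      ((Nat.ceil k).factorial : ℝ) * (R ^ 2) ^ (-k) := by
  have hR2 : (0:ℝ) < R ^ 2 := by positivity
  have hfac : (1:ℝ) ≤ ((Nat.ceil k).factorial : ℝ) := by
    exact_mod_cast Nat.one_le_iff_ne_zero.2 (Nat.ceil k).factorial_pos.ne'
  rcases h with h | h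
  · have h1 : s ^ (-k) ≤ (R ^ 2) ^ (-k) :=
      Real.rpow_le_rpow_of_nonpos hR2 h (by linarith)
    have h2 : Real.exp (-(y ^ 2) / s) ≤ 1 := by
      rw [Real.exp_le_one_iff]
      apply div_nonpos_of_nonpos_of_nonneg (neg_nonpos.2 (by positivity)) hs.le
    calc s ^ (-k) * Real.exp (-(y ^ 2) / s) ≤ (R ^ 2) ^ (-k) * 1 :=
          mul_le_mul h1 h2 (Real.exp_pos _).le (Real.rpow_nonneg hR2.le _)
      _ ≤ ((Nat.ceil k).factorial : ℝ) * (R ^ 2) ^ (-k) := by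
          rw [mul_one]
          exact le_mul_of_one_le_left (Real.rpow_nonneg hR2.le _) hfac
  · set n := Nat.ceil k with hn
    set v := R ^ 2 / s with hv
    have hvp : 0 < v := by positivity
    have key : v ^ k ≤ (n.factorial : ℝ) * Real.exp v := by
      rcases le_total v 1 with hv1 | hv1
      · have e1 : v ^ k ≤ 1 := Real.rpow_le_one hvp.le hv1 hk.le
        have e2 : (1:ℝ) ≤ Real.exp v := Real.one_le_exp hvp.le
        nlinarith
      · have h3 : v ^ k ≤ v ^ (n : ℝ) :=
          Real.rpow_le_rpow_of_exponent_le hv1 (Nat.le_ceil k)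
        rw [Real.rpow_natCast] at h3
        have h4 : v ^ n / (n.factorial : ℝ) ≤ Real.exp v :=
          Real.pow_div_factorial_le_exp v (by positivity) n
        have h5 : (0:ℝ) < (n.factorial : ℝ) := by exact_mod_cast n.factorial_pos
        calc v ^ k ≤ v ^ n := h3
          _ = (n.factorial : ℝ) * (v ^ n / (n.factorial : ℝ)) := by field_simp
          _ ≤ (n.factorial : ℝ) * Real.exp v := by
              exact mul_le_mul_of_nonneg_left h4 h5.le
    have hsk : s ^ (-k) = (R ^ 2) ^ (-k) * v ^ k := by
      have hRk : (R ^ 2 : ℝ) ^ k ≠ 0 := (Real.rpow_pos_of_pos hR2 k).ne'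
      have hskk : (s : ℝ) ^ k ≠ 0 := (Real.rpow_pos_of_pos hs k).ne'
      rw [Real.rpow_neg hs.le, Real.rpow_neg hR2.le, hv, Real.div_rpow hR2.le hs.le]
      field_simp
    have hexp : Real.exp (-(y ^ 2) / s) ≤ Real.exp (-(R ^ 2) / s) := by
      rw [Real.exp_le_exp]
      apply div_le_div_of_nonneg_right ?_ hs.le
      nlinarith
    have hcancel : Real.exp v * Real.exp (-(R ^ 2) / s) = 1 := by
      rw [← Real.exp_add, hv]
      rw [show R ^ 2 / s + -(R ^ 2) / s = (0:ℝ) by ring, Real.exp_zero]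
    calc s ^ (-k) * Real.exp (-(y ^ 2) / s)
        = (R ^ 2) ^ (-k) * (v ^ k * Real.exp (-(y ^ 2) / s)) := by rw [hsk]; ring
      _ ≤ (R ^ 2) ^ (-k) * (((n.factorial : ℝ) * Real.exp v) * Real.exp (-(R ^ 2) / s)) := by
          apply mul_le_mul_of_nonneg_left ?_ (Real.rpow_nonneg hR2.le _)
          exact mul_le_mul key hexp (Real.exp_pos _).le (by positivity)
      _ = ((Nat.ceil k).factorial : ℝ) * (R ^ 2) ^ (-k) := by
          rw [mul_assoc, hcancel, mul_one]; ring

lemma ofReal_two_zpow (M : ℤ) : ENNReal.ofReal ((2:ℝ) ^ M) = (2:ℝ≥0∞) ^ (M:ℝ) := by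
  rw [← Real.rpow_intCast 2 M, ← ENNReal.ofReal_rpow_of_pos two_pos]
  norm_num

lemma ker_le_tsum (d : ℕ) (α : ℝ) (hk : 0 < ((d:ℝ) + 2 - α) / 2) (w : Pt d) :
    pKer d α w.1 ‖w.2‖ ≤
      ∑' n : ℤ, (ENNReal.ofReal ((Nat.ceil (((d:ℝ) + 2 - α) / 2)).factorial) *
          (2:ℝ≥0∞) ^ (-(n:ℝ) * ((d:ℝ) + 2 - α))) *
        (pCyl d ((2:ℝ) ^ (n+1)) ((0:ℝ), (0:Ed d))).indicator 1 w := by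
  set k : ℝ := ((d:ℝ) + 2 - α) / 2 with hkdef
  by_cases hs : 0 < w.1
  swap
  · rw [pKer, if_neg hs]; exact zero_le
  set s := w.1
  set y := ‖w.2‖
  have hy : 0 ≤ y := norm_nonneg _
  set r : ℝ := max (Real.sqrt s) y with hrdef
  have hr : 0 < r := lt_max_iff.2 (Or.inl (Real.sqrt_pos.2 hs))
  set m : ℤ := ⌊Real.logb 2 r⌋ with hmdef
  set R : ℝ := (2:ℝ) ^ m with hRdef
  have hRpos : 0 < R := zpow_pos (by norm_num) m
  have hRle : R ≤ r := by
    have h1 : (2:ℝ) ^ ((m:ℝ)) ≤ (2:ℝ) ^ (Real.logb 2 r) :=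
      Real.rpow_le_rpow_of_exponent_le one_le_two (Int.floor_le _)
    rwa [Real.rpow_logb two_pos (by norm_num) hr, Real.rpow_intCast 2 m] at h1
  have hlt : r < (2:ℝ) ^ (m+1) := by
    have h1 : (2:ℝ) ^ (Real.logb 2 r) < (2:ℝ) ^ (((m:ℝ)) + 1) :=
      Real.rpow_lt_rpow_of_exponent_lt one_lt_two (Int.lt_floor_add_one _)
    rw [Real.rpow_logb two_pos (by norm_num) hr] at h1
    rw [show ((m:ℝ) + 1) = ((m + 1 : ℤ) : ℝ) by push_cast; ring, Real.rpow_intCast] at h1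
    exact h1
  have hT : 0 < (2:ℝ) ^ (m+1) := zpow_pos (by norm_num) _
  have hmem : w ∈ pCyl d ((2:ℝ) ^ (m+1)) ((0:ℝ), (0:Ed d)) := by
    refine ⟨?_, hs.le, ?_⟩
    · show dist (0 : Ed d) w.2 < (2:ℝ) ^ (m+1)
      rw [dist_zero_left]
      exact lt_of_le_of_lt (le_max_right _ _) hlt
    · show w.1 < 0 + ((2:ℝ) ^ (m+1)) ^ 2
      have h1 : Real.sqrt s ≤ r := le_max_left _ _
      have h2 := Real.sq_sqrt hs.le
      nlinarith [Real.sqrt_nonneg s]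
  have hcase : R ^ 2 ≤ s ∨ R ≤ y := by
    rcases le_max_iff.1 hRle with h | h
    · left
      have := Real.sq_sqrt hs.le
      nlinarith [Real.sqrt_nonneg s]
    · right; exact h
  have hbound : pKer d α s y ≤
      ENNReal.ofReal ((Nat.ceil k).factorial) * (2:ℝ≥0∞) ^ (-(m:ℝ) * ((d:ℝ) + 2 - α)) := by
    rw [pKer, if_pos hs]
    have h1 := real_ker_bound k hk s y R hs hRpos hy hcase
    have h2 : ENNReal.ofReal (s ^ (-k) * Real.exp (-(y ^ 2) / s)) ≤
        ENNReal.ofReal (((Nat.ceil k).factorial : ℝ) * (R ^ 2) ^ (-k)) :=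
      ENNReal.ofReal_le_ofReal h1
    have h3 : ENNReal.ofReal (((Nat.ceil k).factorial : ℝ) * (R ^ 2) ^ (-k)) =
        ENNReal.ofReal ((Nat.ceil k).factorial) * (2:ℝ≥0∞) ^ (-(m:ℝ) * ((d:ℝ) + 2 - α)) := by
      rw [ENNReal.ofReal_mul (by positivity)]
      congr 1
      have hR2 : R ^ 2 = (2:ℝ) ^ (m * 2 : ℤ) := by
        rw [hRdef, ← zpow_natCast ((2:ℝ) ^ m) 2, ← zpow_mul]
        norm_num
      rw [hR2, ← Real.rpow_intCast 2 (m*2), ← Real.rpow_mul (by norm_num : (0:ℝ) ≤ 2),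
        ← ENNReal.ofReal_rpow_of_pos two_pos]
      norm_num
      congr 1
      push_cast
      rw [hkdef]
      ring
    rw [h3] at h2
    exact h2
  calc pKer d α s y ≤ (ENNReal.ofReal ((Nat.ceil k).factorial) *
        (2:ℝ≥0∞) ^ (-(m:ℝ) * ((d:ℝ) + 2 - α))) *
        (pCyl d ((2:ℝ) ^ (m+1)) ((0:ℝ), (0:Ed d))).indicator 1 w := by
        rw [Set.indicator_of_mem hmem]
        simpa using hbound
    _ ≤ _ := ENNReal.le_tsum m

lemma two_rpow_ne_top (x : ℝ) : (2:ℝ≥0∞) ^ x ≠ ⊤ := by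
  intro h
  rcases ENNReal.rpow_eq_top_iff.1 h with ⟨h1, _⟩ | ⟨h1, _⟩ <;> norm_num at h1

lemma two_rpow_ne_zero (x : ℝ) : (2:ℝ≥0∞) ^ x ≠ 0 := by
  intro h
  rcases ENNReal.rpow_eq_zero_iff.1 h with ⟨h1, _⟩ | ⟨h1, _⟩ <;> norm_num at h1

lemma geom_half (γ : ℝ) (hγ : 0 < γ) (c : ℝ≥0∞) :
    ∑' k : ℕ, c * ((2:ℝ≥0∞) ^ (-γ)) ^ k = c * (1 - (2:ℝ≥0∞) ^ (-γ))⁻¹ := by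
  rw [ENNReal.tsum_mul_left, ENNReal.tsum_geometric]

lemma key_sum (α β : ℝ) (hα : 0 < α) (hαβ : α < β) (u : ℤ → ℝ≥0∞) (A B : ℝ≥0∞)
    (hA : ∀ n : ℤ, u n ≤ A) (hB : ∀ n : ℤ, u n ≤ (2:ℝ≥0∞) ^ (-((n:ℝ) + 1) * β) * B) :
    ∑' n : ℤ, (2:ℝ≥0∞) ^ ((n:ℝ) * α) * u n ≤
      ((2:ℝ≥0∞) ^ α * (1 - (2:ℝ≥0∞) ^ (-α))⁻¹ + (1 - (2:ℝ≥0∞) ^ (α - β))⁻¹ + 1) *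
        (B ^ (α / β) * A ^ (1 - α / β)) := by
  have hβ : 0 < β := hα.trans hαβ
  have hab1 : 0 < α / β := div_pos hα hβ
  have hab2 : 0 < 1 - α / β := by
    rw [sub_pos]
    exact (div_lt_one hβ).2 hαβ
  have hconst1 : (1:ℝ≥0∞) ≤ (2:ℝ≥0∞) ^ α * (1 - (2:ℝ≥0∞) ^ (-α))⁻¹ + (1 - (2:ℝ≥0∞) ^ (α - β))⁻¹ + 1 :=
    le_add_self
  by_cases hB0 : B = 0
  · have hu : ∀ n, u n = 0 := fun n =>
      le_antisymm (by simpa [hB0] using hB n) (zero_le)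
    simp [hu]
  by_cases hA0 : A = 0
  · have hu : ∀ n, u n = 0 := fun n => le_antisymm (by simpa [hA0] using hA n) (zero_le)
    simp [hu]
  by_cases hAtop : A = ⊤
  · have : A ^ (1 - α / β) = ⊤ := by rw [hAtop]; exact ENNReal.top_rpow_of_pos hab2
    have hrhs : B ^ (α / β) * A ^ (1 - α / β) = ⊤ := by
      rw [this, ENNReal.mul_top]
      exact fun h => hB0 ((ENNReal.rpow_eq_zero_iff_of_pos hab1).1 h)
    refine le_trans le_top ?_
    rw [hrhs, ENNReal.mul_top (fun h => ?_)]
    exact (one_ne_zero (by simpa using le_antisymm (h ▸ hconst1) (zero_le)))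
  by_cases hBtop : B = ⊤
  · have : B ^ (α / β) = ⊤ := by rw [hBtop]; exact ENNReal.top_rpow_of_pos hab1
    have hrhs : B ^ (α / β) * A ^ (1 - α / β) = ⊤ := by
      rw [this, ENNReal.top_mul]
      exact fun h => hA0 ((ENNReal.rpow_eq_zero_iff_of_pos hab2).1 h)
    refine le_trans le_top ?_
    rw [hrhs, ENNReal.mul_top (fun h => ?_)]
    exact (one_ne_zero (by simpa using le_antisymm (h ▸ hconst1) (zero_le)))
  -- main case
  set a : ℝ := A.toReal with hadef
  set b : ℝ := B.toReal with hbdef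
  have ha : 0 < a := ENNReal.toReal_pos hA0 hAtop
  have hb : 0 < b := ENNReal.toReal_pos hB0 hBtop
  have hAa : A = ENNReal.ofReal a := (ENNReal.ofReal_toReal hAtop).symm
  have hBb : B = ENNReal.ofReal b := (ENNReal.ofReal_toReal hBtop).symm
  set r : ℝ := (b / a) ^ (1 / β) with hrdef
  have hrpos : 0 < r := Real.rpow_pos_of_pos (by positivity) _
  set n₀ : ℤ := ⌈Real.logb 2 r⌉ with hn₀
  set t : ℝ := (2:ℝ) ^ ((n₀ : ℝ)) with htdef
  have htpos : 0 < t := Real.rpow_pos_of_pos two_pos _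
  have hrt : r ≤ t := by
    have h1 : (2:ℝ) ^ (Real.logb 2 r) ≤ (2:ℝ) ^ ((n₀:ℝ)) :=
      Real.rpow_le_rpow_of_exponent_le one_le_two (Int.le_ceil _)
    rwa [Real.rpow_logb two_pos (by norm_num) hrpos] at h1
  have ht2r : t ≤ 2 * r := by
    have h1 : (2:ℝ) ^ ((n₀:ℝ)) ≤ (2:ℝ) ^ (Real.logb 2 r + 1) := by
      apply Real.rpow_le_rpow_of_exponent_le one_le_two
      exact_mod_cast (Int.ceil_lt_add_one _).le
    rwa [Real.rpow_add two_pos, Real.rpow_logb two_pos (by norm_num) hrpos,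
      Real.rpow_one, mul_comm] at h1
  -- the target quantity
  set X : ℝ≥0∞ := B ^ (α / β) * A ^ (1 - α / β) with hXdef
  have hXval : X = ENNReal.ofReal (b ^ (α / β) * a ^ (1 - α / β)) := by
    rw [hXdef, hAa, hBb, ENNReal.ofReal_rpow_of_pos hb, ENNReal.ofReal_rpow_of_pos ha,
      ENNReal.ofReal_mul (by positivity)]
  -- real identities
  have hra : r ^ α * a = b ^ (α / β) * a ^ (1 - α / β) := by
    have h1 : r ^ α = (b / a) ^ (α / β) := by
      rw [hrdef, ← Real.rpow_mul (by positivity)]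
      congr 1
      field_simp
    rw [h1, Real.div_rpow hb.le ha.le, Real.rpow_sub ha, Real.rpow_one]
    have : a ^ (α / β) ≠ 0 := (Real.rpow_pos_of_pos ha _).ne'
    field_simp
  have hrβ : r ^ (-β) = a / b := by
    rw [hrdef, ← Real.rpow_mul (by positivity),
      show (1 / β) * (-β) = (-1 : ℝ) by field_simp, Real.rpow_neg_one, inv_div]
  have hrb : r ^ (α - β) * b = b ^ (α / β) * a ^ (1 - α / β) := by
    rw [show α - β = α + (-β) by ring, Real.rpow_add hrpos, hrβ, ← hra]
    field_simp
  -- bounds on the ENNReal powers of 2 at n₀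
  have h2n₀α : (2:ℝ≥0∞) ^ ((n₀:ℝ) * α) * A ≤ ENNReal.ofReal (2 ^ α) * X := by
    have e1 : (2:ℝ≥0∞) ^ ((n₀:ℝ) * α) = ENNReal.ofReal (t ^ α) := by
      rw [htdef, ← Real.rpow_mul (by norm_num : (0:ℝ) ≤ 2),
        ← ENNReal.ofReal_rpow_of_pos two_pos]
      norm_num
    rw [e1, hAa, hXval, ← ENNReal.ofReal_mul (by positivity),
      ← ENNReal.ofReal_mul (by positivity)]
    apply ENNReal.ofReal_le_ofReal
    have : t ^ α ≤ (2 * r) ^ α := Real.rpow_le_rpow htpos.le ht2r hα.le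
    calc t ^ α * a ≤ (2 * r) ^ α * a := by
          exact mul_le_mul_of_nonneg_right this ha.le
      _ = 2 ^ α * (r ^ α * a) := by
          rw [Real.mul_rpow (by norm_num) hrpos.le]; ring
      _ = 2 ^ α * (b ^ (α / β) * a ^ (1 - α / β)) := by rw [hra]
  have h2n₀β : (2:ℝ≥0∞) ^ ((n₀:ℝ) * (α - β)) * B ≤ X := by
    have e1 : (2:ℝ≥0∞) ^ ((n₀:ℝ) * (α - β)) = ENNReal.ofReal (t ^ (α - β)) := by
      rw [htdef, ← Real.rpow_mul (by norm_num : (0:ℝ) ≤ 2),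
        ← ENNReal.ofReal_rpow_of_pos two_pos]
      norm_num
    rw [e1, hBb, hXval, ← ENNReal.ofReal_mul (by positivity)]
    apply ENNReal.ofReal_le_ofReal
    have h1 : t ^ (α - β) ≤ r ^ (α - β) :=
      Real.rpow_le_rpow_of_nonpos hrpos hrt (by linarith)
    calc t ^ (α - β) * b ≤ r ^ (α - β) * b := mul_le_mul_of_nonneg_right h1 hb.le
      _ = b ^ (α / β) * a ^ (1 - α / β) := hrb
  -- splitting of the sum
  set g₁ : ℤ → ℝ≥0∞ := fun n => if n ≤ n₀ then (2:ℝ≥0∞) ^ ((n:ℝ) * α) * A else 0 with hg₁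
  set g₂ : ℤ → ℝ≥0∞ := fun n => if n₀ < n then (2:ℝ≥0∞) ^ ((n:ℝ) * (α - β)) * B else 0 with hg₂
  have hterm : ∀ n : ℤ, (2:ℝ≥0∞) ^ ((n:ℝ) * α) * u n ≤ g₁ n + g₂ n := by
    intro n
    rcases le_or_gt n n₀ with hn | hn
    · refine le_trans ?_ le_self_add
      rw [hg₁]; simp only [if_pos hn]
      exact mul_le_mul_right (hA n) _
    · refine le_trans ?_ le_add_self
      rw [hg₂]; simp only [if_pos hn]
      calc (2:ℝ≥0∞) ^ ((n:ℝ) * α) * u n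
          ≤ (2:ℝ≥0∞) ^ ((n:ℝ) * α) * ((2:ℝ≥0∞) ^ (-((n:ℝ) + 1) * β) * B) :=
            mul_le_mul_right (hB n) _
        _ = (2:ℝ≥0∞) ^ ((n:ℝ) * α + -((n:ℝ) + 1) * β) * B := by
            rw [ENNReal.rpow_add _ _ (by norm_num) (by norm_num), mul_assoc]
        _ ≤ (2:ℝ≥0∞) ^ ((n:ℝ) * (α - β)) * B := by
            apply mul_le_mul_left
            apply ENNReal.rpow_le_rpow_of_exponent_le (by norm_num)
            nlinarith [hβ]
  have hsum1 : ∑' n : ℤ, g₁ n =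
      (2:ℝ≥0∞) ^ ((n₀:ℝ) * α) * A * (1 - (2:ℝ≥0∞) ^ (-α))⁻¹ := by
    have hinj : Function.Injective (fun k : ℕ => n₀ - (k:ℤ)) := by
      intro i j h
      simpa using h
    have hsupp : Function.support g₁ ⊆ Set.range (fun k : ℕ => n₀ - (k:ℤ)) := by
      intro n hn
      simp only [Function.mem_support, hg₁] at hn
      rcases le_or_gt n n₀ with h | h
      · exact ⟨(n₀ - n).toNat, by show n₀ - ((n₀ - n).toNat : ℤ) = n; omega⟩
      · exact (hn (if_neg (not_le.2 h))).elim
    rw [← Function.Injective.tsum_eq hinj hsupp]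
    have : ∀ k : ℕ, g₁ (n₀ - (k:ℤ)) =
        ((2:ℝ≥0∞) ^ ((n₀:ℝ) * α) * A) * ((2:ℝ≥0∞) ^ (-α)) ^ k := by
      intro k
      rw [hg₁]
      simp only [if_pos (by omega : n₀ - (k:ℤ) ≤ n₀)]
      have e : ((n₀ - (k:ℤ) : ℤ) : ℝ) * α = (n₀:ℝ) * α + (-α) * (k:ℝ) := by push_cast; ring
      rw [e, ENNReal.rpow_add _ _ (by norm_num) (by norm_num)]
      have e2 : (2:ℝ≥0∞) ^ ((-α) * (k:ℝ)) = ((2:ℝ≥0∞) ^ (-α)) ^ k := by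
        rw [ENNReal.rpow_mul, ENNReal.rpow_natCast]
      rw [e2]
      ring
    rw [tsum_congr this, ENNReal.tsum_mul_left, ENNReal.tsum_geometric]
  have hsum2 : ∑' n : ℤ, g₂ n =
      (2:ℝ≥0∞) ^ (((n₀:ℝ) + 1) * (α - β)) * B * (1 - (2:ℝ≥0∞) ^ (α - β))⁻¹ := by
    have hinj : Function.Injective (fun k : ℕ => n₀ + 1 + (k:ℤ)) := by
      intro i j h
      simpa using h
    have hsupp : Function.support g₂ ⊆ Set.range (fun k : ℕ => n₀ + 1 + (k:ℤ)) := by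
      intro n hn
      simp only [Function.mem_support, hg₂] at hn
      rcases lt_or_ge n₀ n with h | h
      · exact ⟨(n - n₀ - 1).toNat, by show n₀ + 1 + ((n - n₀ - 1).toNat : ℤ) = n; omega⟩
      · exact (hn (if_neg (not_lt.2 h))).elim
    rw [← Function.Injective.tsum_eq hinj hsupp]
    have : ∀ k : ℕ, g₂ (n₀ + 1 + (k:ℤ)) =
        ((2:ℝ≥0∞) ^ (((n₀:ℝ) + 1) * (α - β)) * B) * ((2:ℝ≥0∞) ^ (α - β)) ^ k := by
      intro k
      rw [hg₂]
      simp only [if_pos (by omega : n₀ < n₀ + 1 + (k:ℤ))]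
      have e : ((n₀ + 1 + (k:ℤ) : ℤ) : ℝ) * (α - β) = ((n₀:ℝ) + 1) * (α - β) + (α - β) * (k:ℝ) := by
        push_cast; ring
      rw [e, ENNReal.rpow_add _ _ (by norm_num) (by norm_num)]
      have e2 : (2:ℝ≥0∞) ^ ((α - β) * (k:ℝ)) = ((2:ℝ≥0∞) ^ (α - β)) ^ k := by
        rw [ENNReal.rpow_mul, ENNReal.rpow_natCast]
      rw [e2]
      ring
    rw [tsum_congr this, ENNReal.tsum_mul_left, ENNReal.tsum_geometric]
  calc ∑' n : ℤ, (2:ℝ≥0∞) ^ ((n:ℝ) * α) * u n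
      ≤ ∑' n : ℤ, (g₁ n + g₂ n) := Summable.tsum_le_tsum hterm ENNReal.summable ENNReal.summable
    _ = ∑' n : ℤ, g₁ n + ∑' n : ℤ, g₂ n := ENNReal.tsum_add
    _ ≤ (ENNReal.ofReal (2 ^ α) * X) * (1 - (2:ℝ≥0∞) ^ (-α))⁻¹ +
        X * (1 - (2:ℝ≥0∞) ^ (α - β))⁻¹ := by
        rw [hsum1, hsum2]
        apply add_le_add
        · exact mul_le_mul_left h2n₀α _
        · apply mul_le_mul_left
          calc (2:ℝ≥0∞) ^ (((n₀:ℝ) + 1) * (α - β)) * B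
              ≤ (2:ℝ≥0∞) ^ ((n₀:ℝ) * (α - β)) * B := by
                apply mul_le_mul_left
                apply ENNReal.rpow_le_rpow_of_exponent_le (by norm_num)
                nlinarith [hαβ]
            _ ≤ X := h2n₀β
    _ ≤ ((2:ℝ≥0∞) ^ α * (1 - (2:ℝ≥0∞) ^ (-α))⁻¹ + (1 - (2:ℝ≥0∞) ^ (α - β))⁻¹ + 1) * X := by
        have e2 : ENNReal.ofReal (2 ^ α) = (2:ℝ≥0∞) ^ α := by
          rw [← ENNReal.ofReal_rpow_of_pos two_pos]; norm_num
        rw [e2]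
        calc (2:ℝ≥0∞) ^ α * X * (1 - (2:ℝ≥0∞) ^ (-α))⁻¹ + X * (1 - (2:ℝ≥0∞) ^ (α - β))⁻¹
            = ((2:ℝ≥0∞) ^ α * (1 - (2:ℝ≥0∞) ^ (-α))⁻¹ + (1 - (2:ℝ≥0∞) ^ (α - β))⁻¹) * X := by
              ring
          _ ≤ _ := by
              apply mul_le_mul_left
              exact le_self_add

/-- Lemma 2.2, (2.3): for `α ∈ (0,β)`, `β ∈ (0, d+2]` there is `N = N(d,α,β)`
such that `P_α f ≤ N (M_β f)^{α/β} (M f)^{1-α/β}` pointwise. -/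
theorem stmt2 (d : ℕ) (hd : 1 ≤ d) (α β : ℝ) (hα : 0 < α) (hαβ : α < β)
    (hβ : β ≤ (d : ℝ) + 2) :
    ∃ N : ℝ, 0 < N ∧ ∀ f : Pt d → ℝ≥0∞, Measurable f → ∀ z : Pt d,
      Palpha d α f z ≤
        ENNReal.ofReal N * Mbeta d β f z ^ (α / β) * Mbeta d 0 f z ^ (1 - α / β) := by
  have hαd : α < (d:ℝ) + 2 := lt_of_lt_of_le hαβ hβ
  set k : ℝ := ((d:ℝ) + 2 - α) / 2 with hkdef
  have hk : 0 < k := div_pos (by linarith) two_pos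
  set C : ℝ := ((Nat.ceil k).factorial : ℝ) with hC
  set V : ℝ≥0∞ := volume (Metric.ball (0 : Ed d) 1) with hV
  have hVne : V ≠ ⊤ := measure_ball_lt_top.ne
  set K₀ : ℝ≥0∞ := ENNReal.ofReal C * V * (2:ℝ≥0∞) ^ ((d:ℝ) + 2) with hK₀
  set K₁ : ℝ≥0∞ :=
    (2:ℝ≥0∞) ^ α * (1 - (2:ℝ≥0∞) ^ (-α))⁻¹ + (1 - (2:ℝ≥0∞) ^ (α - β))⁻¹ + 1 with hK₁
  have hK₀top : K₀ ≠ ⊤ :=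
    ENNReal.mul_ne_top (ENNReal.mul_ne_top ENNReal.ofReal_ne_top hVne) (two_rpow_ne_top _)
  have hK₁top : K₁ ≠ ⊤ := by
    have h1 : (2:ℝ≥0∞) ^ (-α) < 1 :=
      ENNReal.rpow_lt_one_of_one_lt_of_neg one_lt_two (by linarith)
    have h2 : (2:ℝ≥0∞) ^ (α - β) < 1 :=
      ENNReal.rpow_lt_one_of_one_lt_of_neg one_lt_two (by linarith)
    have e1 : (1 - (2:ℝ≥0∞) ^ (-α))⁻¹ ≠ ⊤ := by
      rw [Ne, ENNReal.inv_eq_top, tsub_eq_zero_iff_le]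
      exact fun h => absurd h (not_le.2 h1)
    have e2 : (1 - (2:ℝ≥0∞) ^ (α - β))⁻¹ ≠ ⊤ := by
      rw [Ne, ENNReal.inv_eq_top, tsub_eq_zero_iff_le]
      exact fun h => absurd h (not_le.2 h2)
    exact ENNReal.add_ne_top.2 ⟨ENNReal.add_ne_top.2
      ⟨ENNReal.mul_ne_top (two_rpow_ne_top _) e1, e2⟩, ENNReal.one_ne_top⟩
  refine ⟨(K₀ * K₁).toReal + 1, by positivity, fun f hf z => ?_⟩
  set B : ℝ≥0∞ := Mbeta d β f z with hB
  set A : ℝ≥0∞ := Mbeta d 0 f z with hA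
  set ρ : ℤ → ℝ := fun n => (2:ℝ) ^ (n + 1) with hρdef
  have hρ : ∀ n : ℤ, 0 < ρ n := fun n => zpow_pos (by norm_num) _
  set u : ℤ → ℝ≥0∞ := fun n => pAvg d (ρ n) z f with hu
  set c : ℤ → ℝ≥0∞ :=
    fun n => ENNReal.ofReal C * (2:ℝ≥0∞) ^ (-(n:ℝ) * ((d:ℝ) + 2 - α)) with hc
  have hcne : ∀ n, c n ≠ ⊤ :=
    fun n => ENNReal.mul_ne_top ENNReal.ofReal_ne_top (two_rpow_ne_top _)
  set S : ℤ → Set (Pt d) := fun n => pCyl d (ρ n) ((0:ℝ), (0:Ed d)) with hS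
  set F : Pt d → ℝ≥0∞ := fun w => f (z + w) with hF
  have hFmeas : Measurable F := hf.comp (measurable_id.const_add z)
  -- bounds on u
  have huA : ∀ n : ℤ, u n ≤ A := by
    intro n
    have h1 : ENNReal.ofReal ((ρ n) ^ (0:ℝ)) * pAvg d (ρ n) z f ≤ A := by
      rw [hA, Mbeta]
      exact le_iSup₂ (f := fun ρ' (_ : 0 < ρ') => ENNReal.ofReal (ρ' ^ (0:ℝ)) * pAvg d ρ' z f)
        (ρ n) (hρ n)
    rwa [Real.rpow_zero, ENNReal.ofReal_one, one_mul] at h1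
  have huB : ∀ n : ℤ, u n ≤ (2:ℝ≥0∞) ^ (-((n:ℝ) + 1) * β) * B := by
    intro n
    have h1 : ENNReal.ofReal ((ρ n) ^ β) * pAvg d (ρ n) z f ≤ B := by
      rw [hB, Mbeta]
      exact le_iSup₂ (f := fun ρ' (_ : 0 < ρ') => ENNReal.ofReal (ρ' ^ β) * pAvg d ρ' z f)
        (ρ n) (hρ n)
    have hρβ : ENNReal.ofReal ((ρ n) ^ β) = (2:ℝ≥0∞) ^ (((n:ℝ) + 1) * β) := by
      rw [hρdef]
      simp only
      rw [← Real.rpow_intCast 2 (n+1), ← Real.rpow_mul (by norm_num : (0:ℝ) ≤ 2),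
        ← ENNReal.ofReal_rpow_of_pos two_pos]
      norm_num
    rw [hρβ] at h1
    have h2 := mul_le_mul_right h1 ((2:ℝ≥0∞) ^ (-((n:ℝ) + 1) * β))
    rwa [← mul_assoc, ← ENNReal.rpow_add _ _ (by norm_num) (by norm_num),
      show -((n:ℝ) + 1) * β + ((n:ℝ) + 1) * β = (0:ℝ) by ring,
      ENNReal.rpow_zero, one_mul] at h2
  -- the chain
  have step1 : Palpha d α f z ≤ ∫⁻ w, (∑' n : ℤ, (c n) * (S n).indicator 1 w) * F w := by
    apply lintegral_mono
    intro w
    exact mul_le_mul_left (ker_le_tsum d α hk w) _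
  have step2 : ∫⁻ w, (∑' n : ℤ, (c n) * (S n).indicator 1 w) * F w
      = ∑' n : ℤ, ∫⁻ w, (c n) * (S n).indicator 1 w * F w := by
    rw [← lintegral_tsum]
    · congr 1
      funext w
      rw [ENNReal.tsum_mul_right]
    · intro n
      exact (((measurable_const.indicator (measurableSet_pCyl d _ _)).const_mul
        (c n)).mul hFmeas).aemeasurable
  have step3 : ∀ n : ℤ, ∫⁻ w, (c n) * (S n).indicator 1 w * F w
      = (c n * volume (pCyl d (ρ n) z)) * u n := by
    intro n
    have e1 : ∀ w, (c n) * (S n).indicator 1 w * F w = (c n) * (S n).indicator F w := by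
      intro w
      by_cases h : w ∈ S n <;> simp [h]
    rw [lintegral_congr e1, lintegral_const_mul' _ _ (hcne n),
      lintegral_indicator (measurableSet_pCyl d _ _)]
    rw [show ∫⁻ w in pCyl d (ρ n) ((0:ℝ), (0:Ed d)), F w
        = ∫⁻ w in pCyl d (ρ n) z, f w from lintegral_pCyl_translate d (ρ n) z f]
    have h0 : volume (pCyl d (ρ n) z) ≠ 0 := (volume_pCyl_pos d hd (ρ n) (hρ n) z).ne'
    have htop : volume (pCyl d (ρ n) z) ≠ ⊤ := volume_pCyl_ne_top d hd (ρ n) (hρ n).le z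
    have e4 : volume (pCyl d (ρ n) z) * pAvg d (ρ n) z f = ∫⁻ w in pCyl d (ρ n) z, f w := by
      rw [pAvg, ← mul_assoc, ENNReal.mul_inv_cancel h0 htop, one_mul]
    rw [← e4]
    exact (mul_assoc _ _ _).symm
  have step4 : ∀ n : ℤ, c n * volume (pCyl d (ρ n) z) = K₀ * (2:ℝ≥0∞) ^ ((n:ℝ) * α) := by
    intro n
    rw [volume_pCyl d hd (ρ n) (hρ n).le z]
    have e2 : (ρ n) ^ 2 = (2:ℝ) ^ ((n+1) * 2 : ℤ) := by
      rw [hρdef]; simp only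
      rw [← zpow_natCast ((2:ℝ) ^ (n+1)) 2, ← zpow_mul]
      norm_num
    have e3 : (ρ n) ^ d = (2:ℝ) ^ ((n+1) * (d:ℤ) : ℤ) := by
      rw [hρdef]; simp only
      rw [← zpow_natCast ((2:ℝ) ^ (n+1)) d, ← zpow_mul]
    rw [e2, e3, ofReal_two_zpow, ofReal_two_zpow, hc, hK₀]
    simp only [← hV]
    calc ENNReal.ofReal C * (2:ℝ≥0∞) ^ (-(n:ℝ) * ((d:ℝ) + 2 - α)) *
          ((2:ℝ≥0∞) ^ (((n+1) * 2 : ℤ) : ℝ) * ((2:ℝ≥0∞) ^ (((n+1) * (d:ℤ) : ℤ) : ℝ) * V))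
        = ENNReal.ofReal C * V * ((2:ℝ≥0∞) ^ (-(n:ℝ) * ((d:ℝ) + 2 - α)) *
            (2:ℝ≥0∞) ^ (((n+1) * 2 : ℤ) : ℝ) * (2:ℝ≥0∞) ^ (((n+1) * (d:ℤ) : ℤ) : ℝ)) := by
          ring
      _ = ENNReal.ofReal C * V * ((2:ℝ≥0∞) ^
            (-(n:ℝ) * ((d:ℝ) + 2 - α) + (((n+1) * 2 : ℤ) : ℝ) + (((n+1) * (d:ℤ) : ℤ) : ℝ))) := by
          rw [← ENNReal.rpow_add _ _ (by norm_num) (by norm_num),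
            ← ENNReal.rpow_add _ _ (by norm_num) (by norm_num)]
      _ = ENNReal.ofReal C * V * ((2:ℝ≥0∞) ^ (((d:ℝ) + 2) + (n:ℝ) * α)) := by
          congr 1
          push_cast
          ring
      _ = ENNReal.ofReal C * V * (2:ℝ≥0∞) ^ ((d:ℝ) + 2) * (2:ℝ≥0∞) ^ ((n:ℝ) * α) := by
          rw [ENNReal.rpow_add _ _ (by norm_num) (by norm_num)]
          ring
  calc Palpha d α f z
      ≤ ∑' n : ℤ, ∫⁻ w, (c n) * (S n).indicator 1 w * F w := step2 ▸ step1
    _ = ∑' n : ℤ, K₀ * ((2:ℝ≥0∞) ^ ((n:ℝ) * α) * u n) := by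
        refine tsum_congr fun n => ?_
        rw [step3 n, step4 n, mul_assoc]
    _ = K₀ * ∑' n : ℤ, (2:ℝ≥0∞) ^ ((n:ℝ) * α) * u n := ENNReal.tsum_mul_left
    _ ≤ K₀ * (K₁ * (B ^ (α / β) * A ^ (1 - α / β))) :=
        mul_le_mul_right (key_sum α β hα hαβ u A B huA huB) _
    _ = (K₀ * K₁) * (B ^ (α / β) * A ^ (1 - α / β)) := by ring
    _ ≤ ENNReal.ofReal ((K₀ * K₁).toReal + 1) * (B ^ (α / β) * A ^ (1 - α / β)) := by
        apply mul_le_mul_left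
        calc K₀ * K₁ = ENNReal.ofReal ((K₀ * K₁).toReal) :=
              (ENNReal.ofReal_toReal (ENNReal.mul_ne_top hK₀top hK₁top)).symm
          _ ≤ _ := ENNReal.ofReal_le_ofReal (by linarith)
    _ = ENNReal.ofReal ((K₀ * K₁).toReal + 1) * B ^ (α / β) * A ^ (1 - α / β) :=
        (mul_assoc _ _ _).symm
end
end
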